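/- arXiv:1807.05668 — 4 statements merged into one kernel-verified Lean document; each statement's English description precedes it below -/
import Mathlib

section
/- Let k be a commutative ring, C a skeletally small category, and M a locally finite endo-length C-module. Let (X_i)_{i ∈ I} and (Y_i)_{i ∈ I} be families of submodules of M, each of which is a chain under inclusion, such that M = X_i ⊕ Y_i (internal direct sum) for every i ∈ I, and such that for all i, j ∈ I, X_i ⊆ X_j if and only if Y_i ⊇ Y_j. Then M = (⋃_{i ∈ I} X_i) ⊕ (⋂_{i ∈ I} Y_i), where the union and intersection are the pointwise union and intersection of submodules. -/
open CategoryTheory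

universe u v

variable {k : Type u} [CommRing k] {C : Type v} [SmallCategory C]

/-- The representation of the endomorphism monoid `End a` on `M a` induced by a
`C`-module (functor) `M`. -/
@[simps]
noncomputable def endRep (M : C ⥤ ModuleCat.{u} k) (a : C) :
    Representation k (CategoryTheory.End a) (M.obj a) where
  toFun g := (M.map g).hom
  map_one' := by simp [End.one_def]; rfl
  map_mul' g h := by simp [End.mul_def]; rfl

/-- `M` is locally finite endo-length if each `M a` has finite length as a
module over the monoid algebra `k[End a]`. -/
noncomputable def IsLocallyFiniteEndoLength (M : C ⥤ ModuleCat.{u} k) : Prop :=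
  ∀ a : C,
    IsFiniteLength (MonoidAlgebra k (CategoryTheory.End a)) ((endRep M a).asModule)

/-- A submodule (subfunctor) of the `C`-module `M`. -/
structure Subfunctor (M : C ⥤ ModuleCat.{u} k) where
  toFun : ∀ a : C, Submodule k (M.obj a)
  map_mem : ∀ {a b : C} (α : a ⟶ b) {x : M.obj a}, x ∈ toFun a → M.map α x ∈ toFun b

instance (M : C ⥤ ModuleCat.{u} k) : PartialOrder (Subfunctor M) :=
  PartialOrder.lift Subfunctor.toFun (fun X Y h => by cases X; cases Y; congr)

/-- The `MonoidAlgebra`-submodule of `ρ.asModule` attached to a `ρ`-invariant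
`k`-submodule. -/
noncomputable def Representation.invSubmodule {G V : Type*} [Monoid G] [AddCommMonoid V]
    [Module k V] (ρ : Representation k G V) (p : Submodule k V)
    (hp : ∀ (g : G) (x : V), x ∈ p → ρ g x ∈ p) :
    Submodule (MonoidAlgebra k G) ρ.asModule where
  carrier := ρ.asModuleEquiv ⁻¹' p
  add_mem' {x y} hx hy := by
    simp only [Set.mem_preimage, map_add] at *
    exact add_mem hx hy
  zero_mem' := by simp [Set.mem_preimage]
  smul_mem' r x hx := by
    simp only [Set.mem_preimage, Representation.asModuleEquiv_map_smul] at *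
    induction r using MonoidAlgebra.induction with
    | zero => simpa using p.zero_mem
    | single_add g c f _ _ ih =>
      rw [map_add, LinearMap.add_apply]
      refine add_mem ?_ ih
      rw [Representation.asAlgebraHom_single]
      exact p.smul_mem c (hp g _ hx)

theorem Representation.invSubmodule_le_iff {G V : Type*} [Monoid G] [AddCommMonoid V]
    [Module k V] (ρ : Representation k G V) (p q : Submodule k V)
    (hp : ∀ (g : G) (x : V), x ∈ p → ρ g x ∈ p)
    (hq : ∀ (g : G) (x : V), x ∈ q → ρ g x ∈ q) :
    ρ.invSubmodule p hp ≤ ρ.invSubmodule q hq ↔ p ≤ q := by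
  constructor
  · intro h x hx
    have := h (x := ρ.asModuleEquiv.symm x)
    simpa [Representation.invSubmodule] using this (by simpa [Representation.invSubmodule])
  · intro h x hx
    exact h hx

/-- In a finite-length situation, a chain of invariant submodules has a greatest element. -/
theorem exists_max_of_chain {G V : Type*} [Monoid G] [AddCommGroup V]
    [Module k V] (ρ : Representation k G V)
    (hfl : IsFiniteLength (MonoidAlgebra k G) ρ.asModule)
    {I : Type*} [Nonempty I] (p : I → Submodule k V)
    (hinv : ∀ (i : I) (g : G) (x : V), x ∈ p i → ρ g x ∈ p i)
    (hchain : ∀ i j : I, p i ≤ p j ∨ p j ≤ p i) :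
    ∃ i0 : I, ∀ i : I, p i ≤ p i0 := by
  obtain ⟨hN, _⟩ := isFiniteLength_iff_isNoetherian_isArtinian.mp hfl
  have hwf : WellFounded ((· > ·) :
      Submodule (MonoidAlgebra k G) ρ.asModule → _ → Prop) :=
    isNoetherian_iff.mp hN
  set q : I → Submodule (MonoidAlgebra k G) ρ.asModule :=
    fun i => ρ.invSubmodule (p i) (hinv i) with hq
  obtain ⟨m, ⟨i0, rfl⟩, hm⟩ := hwf.has_min (Set.range q) (Set.range_nonempty q)
  refine ⟨i0, fun i => ?_⟩
  rcases hchain i i0 with h | h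
  · exact h
  · have h2 : q i0 ≤ q i := (ρ.invSubmodule_le_iff _ _ _ _).mpr h
    have h3 : ¬ q i > q i0 := hm (q i) ⟨i, rfl⟩
    have : q i ≤ q i0 := by
      rcases lt_or_eq_of_le h2 with h4 | h4
      · exact absurd h4 h3
      · exact h4.ge
    exact (ρ.invSubmodule_le_iff _ _ _ _).mp this

/-- In a finite-length situation, a chain of invariant submodules has a least element. -/
theorem exists_min_of_chain {G V : Type*} [Monoid G] [AddCommGroup V]
    [Module k V] (ρ : Representation k G V)
    (hfl : IsFiniteLength (MonoidAlgebra k G) ρ.asModule)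
    {I : Type*} [Nonempty I] (p : I → Submodule k V)
    (hinv : ∀ (i : I) (g : G) (x : V), x ∈ p i → ρ g x ∈ p i)
    (hchain : ∀ i j : I, p i ≤ p j ∨ p j ≤ p i) :
    ∃ i0 : I, ∀ i : I, p i0 ≤ p i := by
  obtain ⟨_, hA⟩ := isFiniteLength_iff_isNoetherian_isArtinian.mp hfl
  have hwf : WellFounded ((· < ·) :
      Submodule (MonoidAlgebra k G) ρ.asModule → _ → Prop) :=
    (isArtinian_iff _ _).mp hA
  set q : I → Submodule (MonoidAlgebra k G) ρ.asModule :=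
    fun i => ρ.invSubmodule (p i) (hinv i) with hq
  obtain ⟨m, ⟨i0, rfl⟩, hm⟩ := hwf.has_min (Set.range q) (Set.range_nonempty q)
  refine ⟨i0, fun i => ?_⟩
  rcases hchain i0 i with h | h
  · exact h
  · have h2 : q i ≤ q i0 := (ρ.invSubmodule_le_iff _ _ _ _).mpr h
    have h3 : ¬ q i < q i0 := hm (q i) ⟨i, rfl⟩
    have : q i0 ≤ q i := by
      rcases lt_or_eq_of_le h2 with h4 | h4
      · exact absurd h4 h3
      · exact h4.ge
    exact (ρ.invSubmodule_le_iff _ _ _ _).mp this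

theorem locallyFiniteEndoLength_isCompl_iSup_iInf (M : C ⥤ ModuleCat.{u} k) (hM : IsLocallyFiniteEndoLength M)
    {I : Type*} (X Y : I → Subfunctor M)
    (hXchain : ∀ i j : I, X i ≤ X j ∨ X j ≤ X i)
    (hYchain : ∀ i j : I, Y i ≤ Y j ∨ Y j ≤ Y i)
    (hcompl : ∀ (i : I) (a : C), IsCompl ((X i).toFun a) ((Y i).toFun a))
    (hXY : ∀ i j : I, X i ≤ X j ↔ Y j ≤ Y i) :
    ∀ a : C, IsCompl (⨆ i : I, (X i).toFun a) (⨅ i : I, (Y i).toFun a) := by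
  intro a
  rcases isEmpty_or_nonempty I with hI | hI
  · simpa [iSup_of_empty, iInf_of_empty] using isCompl_bot_top
  · -- invariance of the pointwise submodules under endomorphisms
    have hXinv : ∀ (i : I) (g : CategoryTheory.End a) (x : M.obj a),
        x ∈ (X i).toFun a → (endRep M a) g x ∈ (X i).toFun a :=
      fun i g x hx => (X i).map_mem g hx
    have hYinv : ∀ (i : I) (g : CategoryTheory.End a) (x : M.obj a),
        x ∈ (Y i).toFun a → (endRep M a) g x ∈ (Y i).toFun a :=
      fun i g x hx => (Y i).map_mem g hx
    have hXchain' : ∀ i j : I, (X i).toFun a ≤ (X j).toFun a ∨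
        (X j).toFun a ≤ (X i).toFun a := by
      intro i j
      rcases hXchain i j with h | h
      · exact Or.inl (h a)
      · exact Or.inr (h a)
    have hYchain' : ∀ i j : I, (Y i).toFun a ≤ (Y j).toFun a ∨
        (Y j).toFun a ≤ (Y i).toFun a := by
      intro i j
      rcases hYchain i j with h | h
      · exact Or.inl (h a)
      · exact Or.inr (h a)
    obtain ⟨i1, hi1⟩ := exists_max_of_chain (endRep M a) (hM a)
      (fun i => (X i).toFun a) hXinv hXchain'
    obtain ⟨i2, hi2⟩ := exists_min_of_chain (endRep M a) (hM a)
      (fun i => (Y i).toFun a) hYinv hYchain'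
    -- find a single index achieving both extremes
    obtain ⟨i0, hX0, hY0⟩ : ∃ i0 : I, (∀ i, (X i).toFun a ≤ (X i0).toFun a) ∧
        (∀ i, (Y i0).toFun a ≤ (Y i).toFun a) := by
      rcases hXchain i1 i2 with h | h
      · exact ⟨i2, fun i => (hi1 i).trans (h a), hi2⟩
      · have hY12 : Y i1 ≤ Y i2 := (hXY i2 i1).mp h
        refine ⟨i1, hi1, fun i => ?_⟩
        exact le_trans (le_trans (hY12 a) (hi2 i2)) (hi2 i)
    have h1 : (⨆ i : I, (X i).toFun a) = (X i0).toFun a :=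
      le_antisymm (iSup_le hX0) (le_iSup (fun i => (X i).toFun a) i0)
    have h2 : (⨅ i : I, (Y i).toFun a) = (Y i0).toFun a :=
      le_antisymm (iInf_le (fun i => (Y i).toFun a) i0) (le_iInf hY0)
    rw [h1, h2]
    exact hcompl i0 a
end

section
/- Let k be a commutative ring, C a skeletally small category, and M a locally finite endo-length C-module. Then there exists a family (M_i)_{i ∈ Λ} of submodules of M such that M is the internal direct sum ⊕_{i ∈ Λ} M_i and each M_i is indecomposable. -/
open CategoryTheory

universe u v

variable {k : Type u} [CommRing k] {C : Type v} [SmallCategory C]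

/-- A submodule of `M`, viewed as a `C`-module in its own right. -/
def Subfunctor.toFunctor {M : C ⥤ ModuleCat.{u} k} (N : Subfunctor M) :
    C ⥤ ModuleCat.{u} k where
  obj a := ModuleCat.of k (N.toFun a)
  map α := ModuleCat.ofHom ((M.map α).hom.restrict fun x hx => N.map_mem α hx)
  map_id a := by
    ext x
    simp [LinearMap.restrict_apply, CategoryTheory.Functor.map_id] <;> rfl
  map_comp f g := by
    ext x
    simp [LinearMap.restrict_apply, CategoryTheory.Functor.map_comp] <;> rfl

/-- A `C`-module is indecomposable if it is nonzero and it is not the internal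
direct sum of two nonzero submodules. -/
def IsIndecomposable (M : C ⥤ ModuleCat.{u} k) : Prop :=
  (∃ (a : C) (x : M.obj a), x ≠ 0) ∧
    ∀ X Y : Subfunctor M, (∀ a : C, IsCompl (X.toFun a) (Y.toFun a)) →
      (∀ a : C, X.toFun a = ⊥) ∨ (∀ a : C, Y.toFun a = ⊥)

namespace Subfunctor

variable {M : C ⥤ ModuleCat.{u} k}

lemma le_def {X Y : Subfunctor M} : X ≤ Y ↔ ∀ a, X.toFun a ≤ Y.toFun a := Iff.rfl

protected def bot : Subfunctor M where
  toFun _ := ⊥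
  map_mem := by
    intro a b α x hx
    simp only [Submodule.mem_bot] at hx ⊢
    rw [hx, map_zero]

protected def top : Subfunctor M where
  toFun _ := ⊤
  map_mem := by intro a b α x _; trivial

protected def sup (X Y : Subfunctor M) : Subfunctor M where
  toFun a := X.toFun a ⊔ Y.toFun a
  map_mem := by
    intro a b α x hx
    rcases Submodule.mem_sup.mp hx with ⟨u, hu, v, hv, rfl⟩
    rw [map_add]
    exact Submodule.add_mem_sup (X.map_mem α hu) (Y.map_mem α hv)

def iInfFun (𝒞 : Set (Subfunctor M)) : Subfunctor M where
  toFun a := ⨅ N ∈ 𝒞, N.toFun a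
  map_mem := by
    intro a b α x hx
    simp only [Submodule.mem_iInf] at hx ⊢
    exact fun N hN => N.map_mem α (hx N hN)

def iSupFun (𝒞 : Set (Subfunctor M)) : Subfunctor M where
  toFun a := ⨆ N ∈ 𝒞, N.toFun a
  map_mem := by
    intro a b α x hx
    have h : Submodule.map (M.map α).hom (⨆ N ∈ 𝒞, N.toFun a) ≤ ⨆ N ∈ 𝒞, N.toFun b := by
      rw [Submodule.map_iSup]
      refine iSup_mono fun N => ?_
      rw [Submodule.map_iSup]
      refine iSup_mono fun hN => ?_
      exact Submodule.map_le_iff_le_comap.mpr fun y hy => N.map_mem α hy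
    exact h (Submodule.mem_map_of_mem hx)

end Subfunctor

/-- An `End a`-stable `k`-submodule of `M.obj a` as a module over the monoid algebra. -/
noncomputable def endSubmodule (M : C ⥤ ModuleCat.{u} k) (a : C) (p : Submodule k (M.obj a))
    (hp : ∀ (g : a ⟶ a), ∀ x ∈ p, M.map g x ∈ p) :
    Submodule (MonoidAlgebra k (CategoryTheory.End a)) ((endRep M a).asModule) where
  carrier := (SetLike.coe p : Set ((endRep M a).asModule))
  add_mem' := fun hx hy => p.add_mem hx hy
  zero_mem' := p.zero_mem
  smul_mem' := by
    intro f x hx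
    show ((endRep M a).asAlgebraHom f) x ∈ p
    induction f using MonoidAlgebra.induction with
    | zero => simp only [map_zero, LinearMap.zero_apply]; exact p.zero_mem
    | single_add g r f _ _ ih =>
      rw [map_add]
      refine p.add_mem ?_ ih
      rw [Representation.asAlgebraHom_single]
      exact p.smul_mem r (hp g x hx)

lemma endSubmodule_le_iff (M : C ⥤ ModuleCat.{u} k) (a : C) (p q : Submodule k (M.obj a))
    (hp) (hq) : endSubmodule M a p hp ≤ endSubmodule M a q hq ↔ p ≤ q :=
  ⟨fun h x hx => @h x hx, fun h x hx => @h x hx⟩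

variable {M : C ⥤ ModuleCat.{u} k}

lemma chain_exists_min (hM : IsLocallyFiniteEndoLength M) (a : C) {𝒞 : Set (Subfunctor M)}
    (hc : IsChain (· ≤ ·) 𝒞) (hne : 𝒞.Nonempty) :
    ∃ N ∈ 𝒞, ∀ N' ∈ 𝒞, N.toFun a ≤ N'.toFun a := by
  obtain ⟨hNoeth, hArt⟩ := isFiniteLength_iff_isNoetherian_isArtinian.mp (hM a)
  set e : Subfunctor M → Submodule (MonoidAlgebra k (CategoryTheory.End a)) ((endRep M a).asModule) :=
    fun N => endSubmodule M a (N.toFun a) (fun g x hx => N.map_mem g hx) with he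
  obtain ⟨m, ⟨N, hN, rfl⟩, hmin⟩ := (IsWellFounded.wf (r := (· < ·))).has_min
    (e '' 𝒞) (hne.image e)
  refine ⟨N, hN, fun N' hN' => ?_⟩
  rcases hc.total hN hN' with h | h
  · exact Subfunctor.le_def.mp h a
  · have hle : e N' ≤ e N := (endSubmodule_le_iff M a _ _ _ _).mpr (Subfunctor.le_def.mp h a)
    have : ¬ e N' < e N := hmin (e N') ⟨N', hN', rfl⟩
    have heq : e N' = e N := le_antisymm hle (by
      rcases lt_or_eq_of_le hle with h' | h'
      · exact absurd h' this
      · exact h'.ge)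
    exact (endSubmodule_le_iff M a _ _ _ _).mp heq.ge

lemma chain_exists_max (hM : IsLocallyFiniteEndoLength M) (a : C) {𝒞 : Set (Subfunctor M)}
    (hc : IsChain (· ≤ ·) 𝒞) (hne : 𝒞.Nonempty) :
    ∃ N ∈ 𝒞, ∀ N' ∈ 𝒞, N'.toFun a ≤ N.toFun a := by
  obtain ⟨hNoeth, hArt⟩ := isFiniteLength_iff_isNoetherian_isArtinian.mp (hM a)
  set e : Subfunctor M → Submodule (MonoidAlgebra k (CategoryTheory.End a)) ((endRep M a).asModule) :=
    fun N => endSubmodule M a (N.toFun a) (fun g x hx => N.map_mem g hx) with he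
  obtain ⟨m, ⟨N, hN, rfl⟩, hmax⟩ := hNoeth.wf.has_min (e '' 𝒞) (hne.image e)
  refine ⟨N, hN, fun N' hN' => ?_⟩
  rcases hc.total hN' hN with h | h
  · exact Subfunctor.le_def.mp h a
  · have hle : e N ≤ e N' := (endSubmodule_le_iff M a _ _ _ _).mpr (Subfunctor.le_def.mp h a)
    have : ¬ e N < e N' := hmax (e N') ⟨N', hN', rfl⟩
    have heq : e N = e N' := le_antisymm hle (by
      rcases lt_or_eq_of_le hle with h' | h'
      · exact absurd h' this
      · exact h'.ge)
    exact (endSubmodule_le_iff M a _ _ _ _).mp heq.ge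

section LatticeHelpers

lemma iSup_option_ne_none {α : Type*} {ι : Type*} [CompleteLattice α] (f : Option ι → α) :
    (⨆ (o : Option ι) (_ : o ≠ none), f o) = ⨆ i, f (some i) := by
  apply le_antisymm
  · refine iSup₂_le fun o ho => ?_
    cases o with
    | none => exact absurd rfl ho
    | some i => exact le_iSup (fun i => f (some i)) i
  · exact iSup_le fun i => le_iSup₂ (f := fun o _ => f o) (some i) (by simp)

lemma iSup_option_ne_some {α : Type*} {ι : Type*} [CompleteLattice α] (f : Option ι → α) (i₀ : ι) :
    (⨆ (o : Option ι) (_ : o ≠ some i₀), f o) = f none ⊔ ⨆ (i : ι) (_ : i ≠ i₀), f (some i) := by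
  apply le_antisymm
  · refine iSup₂_le fun o ho => ?_
    cases o with
    | none => exact le_sup_left
    | some i =>
      exact le_sup_of_le_right (le_iSup₂ (f := fun i _ => f (some i)) i (by simpa using ho))
  · refine sup_le (le_iSup₂ (f := fun o _ => f o) none (by simp)) ?_
    exact iSup₂_le fun i hi => le_iSup₂ (f := fun o _ => f o) (some i) (by simpa using hi)

lemma disjoint_sup_of_le {L : Type*} [Lattice L] [OrderBot L] [IsModularLattice L] {u v w t : L}
    (hu : u ≤ w) (hv : v ≤ w) (huv : Disjoint u v) (hwt : Disjoint w t) :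
    Disjoint u (v ⊔ t) := by
  rw [disjoint_iff] at huv hwt ⊢
  have h1 : (v ⊔ t) ⊓ w = v := by
    rw [sup_inf_assoc_of_le t hv, inf_comm t w, hwt, sup_bot_eq]
  calc u ⊓ (v ⊔ t) = (u ⊓ w) ⊓ (v ⊔ t) := by rw [inf_eq_left.mpr hu]
    _ = u ⊓ ((v ⊔ t) ⊓ w) := by rw [inf_assoc, inf_comm w (v ⊔ t)]
    _ = u ⊓ v := by rw [h1]
    _ = ⊥ := huv

lemma IsChain.exists_finset_ub {α : Type*} [Preorder α] {c : Set α} (hc : IsChain (· ≤ ·) c)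
    {ι : Type*} (t : Finset ι) (f : ι → α) (hf : ∀ i ∈ t, f i ∈ c)
    {p₀ : α} (hp₀ : p₀ ∈ c) : ∃ q ∈ c, p₀ ≤ q ∧ ∀ i ∈ t, f i ≤ q := by
  classical
  induction t using Finset.induction_on with
  | empty => exact ⟨p₀, hp₀, le_rfl, by simp⟩
  | @insert i s hi ih =>
    obtain ⟨q, hq, hpq, hub⟩ := ih (fun j hj => hf j (Finset.mem_insert_of_mem hj))
    have hfi : f i ∈ c := hf i (Finset.mem_insert_self i s)
    rcases hc.total hfi hq with h | h
    · exact ⟨q, hq, hpq, fun j hj => by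
        rcases Finset.mem_insert.mp hj with rfl | hj
        · exact h
        · exact hub j hj⟩
    · exact ⟨f i, hfi, hpq.trans h, fun j hj => by
        rcases Finset.mem_insert.mp hj with rfl | hj
        · exact le_rfl
        · exact (hub j hj).trans h⟩

end LatticeHelpers

/-- `X` is indecomposable relative to decompositions by subfunctors of `M`. -/
def RelIndec {M : C ⥤ ModuleCat.{u} k} (X : Subfunctor M) : Prop :=
  ∀ U V : Subfunctor M, (∀ a : C, Disjoint (U.toFun a) (V.toFun a)) →
    (∀ a : C, U.toFun a ⊔ V.toFun a = X.toFun a) →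
    (∀ a : C, U.toFun a = ⊥) ∨ (∀ a : C, V.toFun a = ⊥)

lemma exists_relIndec_summand (hM : IsLocallyFiniteEndoLength M) (N : Subfunctor M) (a₀ : C)
    (h0 : N.toFun a₀ ≠ ⊥) :
    ∃ X Y : Subfunctor M,
      (∀ a, Disjoint (X.toFun a) (Y.toFun a)) ∧
      (∀ a, X.toFun a ⊔ Y.toFun a = N.toFun a) ∧
      X.toFun a₀ ≠ ⊥ ∧ RelIndec X := by
  classical
  set T : Set ((Subfunctor M)ᵒᵈ × Subfunctor M) :=
    {p | (∀ a : C, Disjoint ((OrderDual.ofDual p.1).toFun a) (p.2.toFun a)) ∧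
      (∀ a : C, (OrderDual.ofDual p.1).toFun a ⊔ p.2.toFun a = N.toFun a) ∧
      (OrderDual.ofDual p.1).toFun a₀ ≠ ⊥} with hT
  have hx₀ : (OrderDual.toDual N, Subfunctor.bot (M := M)) ∈ T := by
    refine ⟨fun a => ?_, fun a => ?_, h0⟩
    · exact disjoint_bot_right
    · exact sup_bot_eq _
  have hub : ∀ c ⊆ T, IsChain (· ≤ ·) c → ∀ y ∈ c, ∃ ub ∈ T, ∀ z ∈ c, z ≤ ub := by
    intro c hcT hchain y hy
    set 𝒳 : Set (Subfunctor M) := (fun p => OrderDual.ofDual p.1) '' c with h𝒳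
    set 𝒴 : Set (Subfunctor M) := (fun p => p.2) '' c with h𝒴
    have hc𝒳 : IsChain (· ≤ ·) 𝒳 := by
      rintro _ ⟨p, hp, rfl⟩ _ ⟨q, hq, rfl⟩ hne
      rcases hchain.total hp hq with h | h
      · exact Or.inr h.1
      · exact Or.inl h.1
    have hc𝒴 : IsChain (· ≤ ·) 𝒴 := by
      rintro _ ⟨p, hp, rfl⟩ _ ⟨q, hq, rfl⟩ hne
      rcases hchain.total hp hq with h | h
      · exact Or.inl h.2
      · exact Or.inr h.2
    have hne𝒳 : 𝒳.Nonempty := ⟨_, y, hy, rfl⟩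
    have hne𝒴 : 𝒴.Nonempty := ⟨_, y, hy, rfl⟩
    set Xinf := Subfunctor.iInfFun 𝒳 with hXinf
    set Ysup := Subfunctor.iSupFun 𝒴 with hYsup
    -- pointwise attainment
    have hatt : ∀ a : C, ∃ p ∈ c, (OrderDual.ofDual p.1).toFun a = Xinf.toFun a ∧
        p.2.toFun a = Ysup.toFun a := by
      intro a
      obtain ⟨Nx, ⟨p₁, hp₁, rfl⟩, hNx⟩ := chain_exists_min hM a hc𝒳 hne𝒳
      obtain ⟨Ny, ⟨p₂, hp₂, rfl⟩, hNy⟩ := chain_exists_max hM a hc𝒴 hne𝒴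
      have hXval : ∀ p ∈ c, Xinf.toFun a ≤ (OrderDual.ofDual p.1).toFun a := by
        intro p hp
        exact iInf₂_le _ ⟨p, hp, rfl⟩
      have hYval : ∀ p ∈ c, p.2.toFun a ≤ Ysup.toFun a := by
        intro p hp
        exact le_iSup₂ (f := fun (N : Subfunctor M) (_ : N ∈ 𝒴) => N.toFun a) _ ⟨p, hp, rfl⟩
      have hXeq : Xinf.toFun a = (OrderDual.ofDual p₁.1).toFun a := by
        refine le_antisymm (hXval p₁ hp₁) (le_iInf₂ fun N hN => ?_)
        exact hNx N hN
      have hYeq : Ysup.toFun a = p₂.2.toFun a := by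
        refine le_antisymm (iSup₂_le fun N hN => hNy N hN) (hYval p₂ hp₂)
      rcases hchain.total hp₁ hp₂ with h | h
      · -- p₁ ≤ p₂ : X of p₂ smaller, Y of p₂ bigger
        have h1 : (OrderDual.ofDual p₂.1).toFun a ≤ (OrderDual.ofDual p₁.1).toFun a :=
          Subfunctor.le_def.mp (OrderDual.ofDual_le_ofDual.mpr h.1) a
        refine ⟨p₂, hp₂, le_antisymm (h1.trans hXeq.ge) (hXval p₂ hp₂), ?_⟩
        exact hYeq.symm
      · have h2 : p₂.2.toFun a ≤ p₁.2.toFun a := Subfunctor.le_def.mp h.2 a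
        exact ⟨p₁, hp₁, hXeq.symm, le_antisymm (hYval p₁ hp₁) (hYeq.le.trans h2)⟩
    refine ⟨(OrderDual.toDual Xinf, Ysup), ?_, ?_⟩
    · refine ⟨fun a => ?_, fun a => ?_, ?_⟩
      · show Disjoint (Xinf.toFun a) (Ysup.toFun a)
        obtain ⟨p, hp, h1, h2⟩ := hatt a
        rw [← h1, ← h2]
        exact (hcT hp).1 a
      · show Xinf.toFun a ⊔ Ysup.toFun a = N.toFun a
        obtain ⟨p, hp, h1, h2⟩ := hatt a
        rw [← h1, ← h2]
        exact (hcT hp).2.1 a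
      · show Xinf.toFun a₀ ≠ ⊥
        obtain ⟨p, hp, h1, h2⟩ := hatt a₀
        rw [← h1]
        exact (hcT hp).2.2
    · intro z hz
      constructor
      · show Xinf ≤ OrderDual.ofDual z.1
        exact Subfunctor.le_def.mpr fun a => iInf₂_le _ ⟨z, hz, rfl⟩
      · show z.2 ≤ Ysup
        exact Subfunctor.le_def.mpr fun a =>
          le_iSup₂ (f := fun (N : Subfunctor M) (_ : N ∈ 𝒴) => N.toFun a) _ ⟨z, hz, rfl⟩
  obtain ⟨m, hm_ge, hm⟩ := zorn_le_nonempty₀ T hub _ hx₀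
  · set X := OrderDual.ofDual m.1 with hX
    set Y := m.2 with hY
    obtain ⟨hdisj, hsup, hbot⟩ := hm.1
    refine ⟨X, Y, hdisj, hsup, hbot, ?_⟩
    intro U V hUV hUVsup
    have hUX : ∀ a, U.toFun a ≤ X.toFun a := fun a => le_trans le_sup_left (hUVsup a).le
    have hVX : ∀ a, V.toFun a ≤ X.toFun a := fun a => le_trans le_sup_right (hUVsup a).le
    by_cases hU0 : U.toFun a₀ = ⊥
    · -- V is nonzero at a₀; replace X by V
      have hV0 : V.toFun a₀ ≠ ⊥ := by
        intro hV0
        apply hbot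
        rw [← hUVsup a₀, hU0, hV0, sup_bot_eq]
      have hmem : (OrderDual.toDual V, Subfunctor.sup U Y) ∈ T := by
        refine ⟨fun a => ?_, fun a => ?_, hV0⟩
        · exact disjoint_sup_of_le (hVX a) (hUX a) ((hUV a).symm) (hdisj a)
        · show V.toFun a ⊔ (U.toFun a ⊔ Y.toFun a) = N.toFun a
          rw [← sup_assoc, sup_comm (V.toFun a) (U.toFun a), hUVsup a, hsup a]
      have hle : m ≤ (OrderDual.toDual V, Subfunctor.sup U Y) := by
        constructor
        · show V ≤ X
          exact Subfunctor.le_def.mpr hVX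
        · show Y ≤ Subfunctor.sup U Y
          exact Subfunctor.le_def.mpr fun a => le_sup_right
      have hgle := hm.2 hmem hle
      have hUY : ∀ a, U.toFun a ≤ Y.toFun a := by
        intro a
        have h2 : Subfunctor.sup U Y ≤ Y := hgle.2
        exact le_trans le_sup_left (Subfunctor.le_def.mp h2 a)
      left
      intro a
      have := le_inf (hUX a) (hUY a)
      rwa [(hdisj a).eq_bot, le_bot_iff] at this
    · -- U is nonzero at a₀; replace X by U
      have hmem : (OrderDual.toDual U, Subfunctor.sup V Y) ∈ T := by
        refine ⟨fun a => ?_, fun a => ?_, hU0⟩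
        · exact disjoint_sup_of_le (hUX a) (hVX a) (hUV a) (hdisj a)
        · show U.toFun a ⊔ (V.toFun a ⊔ Y.toFun a) = N.toFun a
          rw [← sup_assoc, hUVsup a, hsup a]
      have hle : m ≤ (OrderDual.toDual U, Subfunctor.sup V Y) := by
        constructor
        · show U ≤ X
          exact Subfunctor.le_def.mpr hUX
        · show Y ≤ Subfunctor.sup V Y
          exact Subfunctor.le_def.mpr fun a => le_sup_right
      have hgle := hm.2 hmem hle
      have hVY : ∀ a, V.toFun a ≤ Y.toFun a := by
        intro a
        have h2 : Subfunctor.sup V Y ≤ Y := hgle.2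
        exact le_trans le_sup_left (Subfunctor.le_def.mp h2 a)
      right
      intro a
      have := le_inf (hVX a) (hVY a)
      rwa [(hdisj a).eq_bot, le_bot_iff] at this

/-- The family of submodules at `a` given by a set `S` of subfunctors together with an extra
subfunctor `Y`, indexed by `Option ↥S`. -/
def Fam (S : Set (Subfunctor M)) (Y : Subfunctor M) (a : C) :
    Option ↥S → Submodule k (M.obj a) :=
  fun o => o.elim (Y.toFun a) (fun X => X.1.toFun a)

@[simp] lemma Fam_none {S : Set (Subfunctor M)} {Y : Subfunctor M} {a : C} :
    Fam S Y a none = Y.toFun a := rfl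

@[simp] lemma Fam_some {S : Set (Subfunctor M)} {Y : Subfunctor M} {a : C} (X : ↥S) :
    Fam S Y a (some X) = X.1.toFun a := rfl

theorem locallyFiniteEndoLength_directSum_indecomposable (M : C ⥤ ModuleCat.{u} k) (hM : IsLocallyFiniteEndoLength M) :
    ∃ (Λ : Type (max u v)) (Mi : Λ → Subfunctor M),
      (∀ a : C, iSupIndep (fun i : Λ => (Mi i).toFun a) ∧
        (⨆ i : Λ, (Mi i).toFun a) = ⊤) ∧
      (∀ i : Λ, IsIndecomposable (Mi i).toFunctor) := by
  classical
  set T : Set (Set (Subfunctor M) × (Subfunctor M)ᵒᵈ) :=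
    {p | (∀ X ∈ p.1, RelIndec X ∧ ∃ a, X.toFun a ≠ ⊥) ∧
      ∀ a : C, iSupIndep (Fam p.1 (OrderDual.ofDual p.2) a) ∧
        (⨆ o, Fam p.1 (OrderDual.ofDual p.2) a o) = ⊤} with hT
  have hx₀ : ((∅ : Set (Subfunctor M)), OrderDual.toDual (Subfunctor.top (M := M))) ∈ T := by
    refine ⟨fun X hX => absurd hX (Set.notMem_empty X), fun a => ⟨?_, ?_⟩⟩
    · intro o
      match o with
      | none =>
        rw [iSup_option_ne_none]
        have : IsEmpty (↥(∅ : Set (Subfunctor M))) := by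
          simp [Set.isEmpty_coe_sort]
        rw [iSup_of_empty]
        exact disjoint_bot_right
      | some X => exact absurd X.2 (Set.notMem_empty X.1)
    · refine eq_top_iff.mpr (le_trans ?_ (le_iSup _ none))
      exact le_rfl
  have hub : ∀ c ⊆ T, IsChain (· ≤ ·) c → ∀ y ∈ c, ∃ ub ∈ T, ∀ z ∈ c, z ≤ ub := by
    intro c hcT hchain y hy
    set Su : Set (Subfunctor M) := ⋃ p ∈ c, p.1 with hSu
    set 𝒴 : Set (Subfunctor M) := (fun p => OrderDual.ofDual p.2) '' c with h𝒴
    have hc𝒴 : IsChain (· ≤ ·) 𝒴 := by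
      rintro _ ⟨p, hp, rfl⟩ _ ⟨q, hq, rfl⟩ hne
      rcases hchain.total hp hq with h | h
      · exact Or.inr (OrderDual.ofDual_le_ofDual.mpr h.2)
      · exact Or.inl (OrderDual.ofDual_le_ofDual.mpr h.2)
    have hne𝒴 : 𝒴.Nonempty := ⟨_, y, hy, rfl⟩
    set Yi := Subfunctor.iInfFun 𝒴 with hYi
    have hYle : ∀ p ∈ c, ∀ a : C, Yi.toFun a ≤ (OrderDual.ofDual p.2).toFun a := by
      intro p hp a
      exact iInf₂_le _ ⟨p, hp, rfl⟩
    have hattY : ∀ a : C, ∃ p ∈ c, (OrderDual.ofDual p.2).toFun a = Yi.toFun a := by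
      intro a
      obtain ⟨Ny, ⟨p₁, hp₁, rfl⟩, hNy⟩ := chain_exists_min hM a hc𝒴 hne𝒴
      exact ⟨p₁, hp₁, le_antisymm (le_iInf₂ fun N hN => hNy N hN) (hYle p₁ hp₁ a)⟩
    -- choice of covering chain elements
    have hScov : ∀ Z : ↥Su, ∃ p, p ∈ c ∧ Z.1 ∈ p.1 := by
      intro Z
      obtain ⟨p, hp, hZ⟩ := Set.mem_iUnion₂.mp Z.2
      exact ⟨p, hp, hZ⟩
    choose pZ hpZc hpZm using hScov
    refine ⟨(Su, OrderDual.toDual Yi), ⟨?_, ?_⟩, ?_⟩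
    · intro X hX
      obtain ⟨p, hp, hXp⟩ := Set.mem_iUnion₂.mp hX
      exact (hcT hp).1 X hXp
    · intro a
      constructor
      · -- independence
        intro o
        rw [Submodule.disjoint_def]
        intro x hxo hxs
        rw [iSup_subtype'] at hxs
        obtain ⟨t, hxt⟩ := Submodule.exists_finset_of_mem_iSup _ hxs
        set f : {o' : Option ↥Su // o' ≠ o} → Set (Subfunctor M) × (Subfunctor M)ᵒᵈ :=
          fun o'' => o''.1.elim y (fun Z => pZ Z) with hf
        have hfc : ∀ i ∈ t, f i ∈ c := by
          intro i _
          obtain ⟨o', ho'⟩ := i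
          cases o' with
          | none => exact hy
          | some Z => exact hpZc Z
        cases o with
        | none =>
          obtain ⟨q, hqc, _, hub'⟩ := hchain.exists_finset_ub t f hfc hy
          have hq_ind := ((hcT hqc).2 a).1 none
          refine (Submodule.disjoint_def.mp hq_ind) x ?_ ?_
          · exact hYle q hqc a hxo
          · refine (iSup₂_le ?_ : _ ≤ ⨆ (o₂ : Option ↥q.1) (_ : o₂ ≠ none),
                Fam q.1 (OrderDual.ofDual q.2) a o₂) hxt
            intro o'' ho''
            obtain ⟨o', ho'⟩ := o''
            cases o' with
            | none => exact absurd rfl ho'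
            | some Z =>
              have hZq : Z.1 ∈ q.1 := (hub' ⟨some Z, ho'⟩ ho'').1 (hpZm Z)
              refine le_trans ?_ (le_iSup₂
                (f := fun (o₂ : Option ↥q.1) (_ : o₂ ≠ none) =>
                  Fam q.1 (OrderDual.ofDual q.2) a o₂) (some ⟨Z.1, hZq⟩) (by simp))
              simp
        | some Z₀ =>
          obtain ⟨q, hqc, hbase, hub'⟩ := hchain.exists_finset_ub t f hfc (hpZc Z₀)
          have hZ₀q : Z₀.1 ∈ q.1 := hbase.1 (hpZm Z₀)
          have hq_ind := ((hcT hqc).2 a).1 (some ⟨Z₀.1, hZ₀q⟩)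
          refine (Submodule.disjoint_def.mp hq_ind) x ?_ ?_
          · exact hxo
          · refine (iSup₂_le ?_ : _ ≤ ⨆ (o₂ : Option ↥q.1) (_ : o₂ ≠ some ⟨Z₀.1, hZ₀q⟩),
                Fam q.1 (OrderDual.ofDual q.2) a o₂) hxt
            intro o'' ho''
            obtain ⟨o', ho'⟩ := o''
            cases o' with
            | none =>
              refine le_trans ?_ (le_iSup₂
                (f := fun (o₂ : Option ↥q.1) (_ : o₂ ≠ some ⟨Z₀.1, hZ₀q⟩) =>
                  Fam q.1 (OrderDual.ofDual q.2) a o₂) none (by simp))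
              exact hYle q hqc a
            | some Z =>
              have hZq : Z.1 ∈ q.1 := (hub' ⟨some Z, ho'⟩ ho'').1 (hpZm Z)
              have hne : Z.1 ≠ Z₀.1 := fun h => ho' (by rw [Subtype.ext h])
              refine le_trans ?_ (le_iSup₂
                (f := fun (o₂ : Option ↥q.1) (_ : o₂ ≠ some ⟨Z₀.1, hZ₀q⟩) =>
                  Fam q.1 (OrderDual.ofDual q.2) a o₂) (some ⟨Z.1, hZq⟩) (by simp [hne]))
              simp
      · -- top
        obtain ⟨p₀, hp₀c, hp₀a⟩ := hattY a
        have hp₀top := ((hcT hp₀c).2 a).2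
        refine eq_top_iff.mpr ?_
        rw [← hp₀top]
        refine iSup_le fun o => ?_
        match o with
        | none =>
          refine le_trans ?_ (le_iSup (Fam Su Yi a) none)
          simpa using hp₀a.le
        | some X =>
          refine le_trans ?_
            (le_iSup (Fam Su Yi a) (some ⟨X.1, Set.mem_iUnion₂.mpr ⟨p₀, hp₀c, X.2⟩⟩))
          simp
    · intro z hz
      refine ⟨?_, ?_⟩
      · show z.1 ⊆ Su
        exact fun X hX => Set.mem_iUnion₂.mpr ⟨z, hz, hX⟩
      · show Yi ≤ OrderDual.ofDual z.2
        exact Subfunctor.le_def.mpr fun a => hYle z hz a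
  obtain ⟨m, hm_ge, hm⟩ := zorn_le_nonempty₀ T hub _ hx₀
  set S : Set (Subfunctor M) := m.1 with hS
  set Y : Subfunctor M := OrderDual.ofDual m.2 with hYdef
  obtain ⟨hSind, hSY⟩ := hm.1
  have hYbot : ∀ a : C, Y.toFun a = ⊥ := by
    by_contra h
    push_neg at h
    obtain ⟨a₀, ha₀⟩ := h
    obtain ⟨X', Y', hd, hs, hX'0, hXindec⟩ := exists_relIndec_summand hM Y a₀ ha₀
    have hX'leY : ∀ a, X'.toFun a ≤ Y.toFun a := fun a => le_sup_left.trans (hs a).le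
    have hY'leY : ∀ a, Y'.toFun a ≤ Y.toFun a := fun a => le_sup_right.trans (hs a).le
    have hX'S : X' ∉ S := by
      intro hmm
      have hind := (hSY a₀).1 (some ⟨X', hmm⟩)
      have h1 : X'.toFun a₀ ≤ ⨆ (o' : Option ↥S) (_ : o' ≠ some ⟨X', hmm⟩), Fam S Y a₀ o' :=
        le_trans (hX'leY a₀) (le_iSup₂
          (f := fun (o' : Option ↥S) (_ : o' ≠ some ⟨X', hmm⟩) => Fam S Y a₀ o') none (by simp))
      exact hX'0 (le_bot_iff.mp (hind le_rfl h1))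
    have hYA : ∀ a, Disjoint (Y.toFun a) (⨆ i : ↥S, (i : Subfunctor M).toFun a) := by
      intro a
      have h2 := (hSY a).1 none
      rwa [iSup_option_ne_none] at h2
    have htop' : ∀ a, Y.toFun a ⊔ (⨆ i : ↥S, (i : Subfunctor M).toFun a) = ⊤ := by
      intro a
      have h2 := (hSY a).2
      rwa [iSup_option] at h2
    set S' : Set (Subfunctor M) := insert X' S with hS'
    have hA'le : ∀ a, (⨆ i : ↥S', (i : Subfunctor M).toFun a) ≤
        X'.toFun a ⊔ ⨆ i : ↥S, (i : Subfunctor M).toFun a := by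
      intro a
      refine iSup_le fun Z => ?_
      rcases Z.2 with h | h
      · rw [show (Z : Subfunctor M) = X' from h]
        exact le_sup_left
      · exact le_sup_of_le_right (le_iSup (fun i : ↥S => (i : Subfunctor M).toFun a) ⟨Z.1, h⟩)
    have hnewmem : (S', OrderDual.toDual Y') ∈ T := by
      refine ⟨?_, ?_⟩
      · intro X hX
        rcases hX with h | h
        · exact h ▸ ⟨hXindec, a₀, hX'0⟩
        · exact hSind X h
      · intro a
        constructor
        · intro o
          match o with
          | none =>
            rw [iSup_option_ne_none]
            show Disjoint (Y'.toFun a) _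
            refine Disjoint.mono_right (le_trans (le_of_eq ?_) (hA'le a)) ?_
            · rfl
            · exact disjoint_sup_of_le (hY'leY a) (hX'leY a) (hd a).symm (hYA a)
          | some Z =>
            rw [iSup_option_ne_some]
            by_cases hz : (Z : Subfunctor M) = X'
            · have hrest : (⨆ (W : ↥S') (_ : W ≠ Z), Fam S' Y' a (some W)) ≤
                  ⨆ i : ↥S, (i : Subfunctor M).toFun a := by
                refine iSup₂_le fun W hW => ?_
                rcases W.2 with h | h
                · exact absurd (Subtype.ext (h.trans hz.symm)) hW
                · exact le_iSup (fun i : ↥S => (i : Subfunctor M).toFun a) ⟨W.1, h⟩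
              refine Disjoint.mono_right (sup_le_sup (le_refl (Y'.toFun a)) hrest) ?_
              show Disjoint ((Z : Subfunctor M).toFun a) _
              rw [hz]
              exact disjoint_sup_of_le (hX'leY a) (hY'leY a) (hd a) (hYA a)
            · have hZS : (Z : Subfunctor M) ∈ S := by
                rcases Z.2 with h | h
                · exact absurd h hz
                · exact h
              have hold := (hSY a).1 (some ⟨Z.1, hZS⟩)
              rw [iSup_option_ne_some] at hold
              simp only [Fam_none, Fam_some] at hold ⊢
              refine Disjoint.mono_right ?_ hold
              refine sup_le (le_sup_of_le_left (hY'leY a)) (iSup₂_le fun W hW => ?_)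
              rcases W.2 with hw | hw
              · exact le_sup_of_le_left (by rw [show (W : Subfunctor M) = X' from hw]; exact hX'leY a)
              · refine le_sup_of_le_right (le_iSup₂
                  (f := fun (W' : ↥S) (_ : W' ≠ ⟨Z.1, hZS⟩) => (W' : Subfunctor M).toFun a)
                  ⟨W.1, hw⟩ ?_)
                intro hEq
                rw [Subtype.mk.injEq] at hEq
                exact hW (Subtype.ext hEq)
        · rw [iSup_option]
          simp only [Fam_none, Fam_some]
          refine eq_top_iff.mpr ?_
          rw [← htop' a]
          refine sup_le ?_ ?_
          · rw [← hs a]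
            refine sup_le ?_ le_sup_left
            exact le_sup_of_le_right
              (le_iSup (fun i : ↥S' => (i : Subfunctor M).toFun a) ⟨X', Set.mem_insert _ _⟩)
          · refine le_sup_of_le_right (iSup_le fun i => ?_)
            exact le_iSup (fun i : ↥S' => (i : Subfunctor M).toFun a) ⟨i.1, Set.mem_insert_of_mem _ i.2⟩
    have hle : m ≤ (S', OrderDual.toDual Y') := by
      constructor
      · show m.1 ⊆ S'
        exact Set.subset_insert _ _
      · show Y' ≤ Y
        exact Subfunctor.le_def.mpr hY'leY
    have hgle := hm.2 hnewmem hle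
    exact hX'S (hgle.1 (Set.mem_insert _ _))
  refine ⟨↥S, fun i => (i : Subfunctor M), fun a => ⟨?_, ?_⟩, ?_⟩
  · exact ((hSY a).1).comp (Option.some_injective ↥S)
  · have h2 := (hSY a).2
    rw [iSup_option] at h2
    simp only [Fam_none, Fam_some] at h2
    have h3 : Y.toFun a ⊔ (⨆ b : ↥S, (b : Subfunctor M).toFun a) = ⊤ := h2
    rw [hYbot a, bot_sup_eq] at h3
    exact h3
  · intro i
    obtain ⟨hRel, a₁, hne⟩ := hSind i.1 i.2
    set X : Subfunctor M := (i : Subfunctor M) with hXdef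
    constructor
    · obtain ⟨x, hxmem, hx0⟩ := (Submodule.ne_bot_iff _).mp hne
      exact ⟨a₁, ⟨x, hxmem⟩, fun h => hx0 (congrArg Subtype.val h)⟩
    · intro U V hcompl
      have hmapmem : ∀ (W : Subfunctor X.toFunctor) {a b : C} (α : a ⟶ b) (x : M.obj a),
          x ∈ (W.toFun a).map (X.toFun a).subtype →
          M.map α x ∈ (W.toFun b).map (X.toFun b).subtype := by
        intro W a b α x hx
        obtain ⟨u, hu, rfl⟩ := hx
        exact ⟨X.toFunctor.map α u, W.map_mem α hu, by rfl⟩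
      set U' : Subfunctor M := ⟨fun a => (U.toFun a).map (X.toFun a).subtype,
        fun {a b} α {x} hx => hmapmem U α x hx⟩ with hU'
      set V' : Subfunctor M := ⟨fun a => (V.toFun a).map (X.toFun a).subtype,
        fun {a b} α {x} hx => hmapmem V α x hx⟩ with hV'
      have hd' : ∀ a, Disjoint (U'.toFun a) (V'.toFun a) := by
        intro a
        rw [disjoint_iff]
        show (U.toFun a).map _ ⊓ (V.toFun a).map _ = ⊥
        erw [← Submodule.map_inf _ (Submodule.injective_subtype _),
          (hcompl a).disjoint.eq_bot, Submodule.map_bot]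
      have hs' : ∀ a, U'.toFun a ⊔ V'.toFun a = X.toFun a := by
        intro a
        show (U.toFun a).map _ ⊔ (V.toFun a).map _ = _
        erw [← Submodule.map_sup, (hcompl a).codisjoint.eq_top, Submodule.map_top,
          Submodule.range_subtype]
      have hback : ∀ (W : Subfunctor X.toFunctor),
          (∀ a, (W.toFun a).map (X.toFun a).subtype = ⊥) → ∀ a, W.toFun a = ⊥ := by
        intro W hW a
        rw [eq_bot_iff]
        intro x hx
        have hx' : (X.toFun a).subtype x ∈ (W.toFun a).map (X.toFun a).subtype := ⟨x, hx, rfl⟩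
        rw [hW a] at hx'
        have hx0 : (X.toFun a).subtype x = 0 := by simpa using hx'
        exact (Submodule.mem_bot _).mpr (Subtype.ext hx0)
      rcases hRel U' V' hd' hs' with h | h
      · exact Or.inl (hback U h)
      · exact Or.inr (hback V h)
end

section
/- Let k be a commutative ring, C a skeletally small category, and M an indecomposable locally finite endo-length C-module. Then the endomorphism ring End(M) of M in the category of C-modules (i.e., the ring of natural transformations M → M) is a local ring. -/
open CategoryTheory

universe u v

variable {k : Type u} [CommRing k] {C : Type v} [SmallCategory C]

section Aux

variable (M : C ⥤ ModuleCat.{u} k)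

def fApp (f : CategoryTheory.End M) (a : C) : Module.End k (M.obj a) := (f.app a).hom

lemma fApp_naturality (f : CategoryTheory.End M) {a b : C} (α : a ⟶ b) (x : M.obj a) :
    fApp M f b (M.map α x) = M.map α (fApp M f a x) := by
  change (M.map α ≫ f.app b) x = (f.app a ≫ M.map α) x
  rw [f.naturality α]

lemma fApp_pow_naturality (f : CategoryTheory.End M) {a b : C} (α : a ⟶ b) (n : ℕ)
    (x : M.obj a) :
    (fApp M f b ^ n) (M.map α x) = M.map α ((fApp M f a ^ n) x) := by
  induction n with
  | zero => simp
  | succ n ih => rw [pow_succ', pow_succ']; simp only [Module.End.mul_apply]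
                 rw [ih, fApp_naturality]

noncomputable def endToModEnd (f : CategoryTheory.End M) (a : C) :
    Module.End (MonoidAlgebra k (CategoryTheory.End a)) ((endRep M a).asModule) where
  toFun x := fApp M f a x
  map_add' := (fApp M f a).map_add
  map_smul' r x := by
    show fApp M f a ((endRep M a).asAlgebraHom r x) = (endRep M a).asAlgebraHom r (fApp M f a x)
    induction r using MonoidAlgebra.induction_on with
    | of g =>
        simp only [Representation.asAlgebraHom_single_one, MonoidAlgebra.of_apply, endRep_apply]
        exact fApp_naturality M f g x
    | add p q hp hq => rw [map_add]; exact (map_add (fApp M f a) ((endRep M a).asAlgebraHom p x) ((endRep M a).asAlgebraHom q x)).trans (congrArg₂ (· + ·) hp hq)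
    | smul r p hp => rw [map_smul]; exact (LinearMap.map_smul (fApp M f a) r ((endRep M a).asAlgebraHom p x)).trans (congrArg (r • ·) hp)

lemma endToModEnd_pow_apply (f : CategoryTheory.End M) (a : C) (n : ℕ) :
    ∀ x : M.obj a, (endToModEnd M f a ^ n) x = (fApp M f a ^ n) x := by
  induction n with
  | zero => intro x; rfl
  | succ n ih =>
      intro x
      rw [pow_succ, pow_succ]
      simp only [Module.End.mul_apply]
      exact ih (fApp M f a x)

lemma mem_iSup_ker_pow {R : Type*} {V : Type*} [Ring R] [AddCommGroup V] [Module R V]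
    (g : Module.End R V) (x : V) :
    x ∈ ⨆ n, LinearMap.ker (g ^ n) ↔ ∃ n, (g ^ n) x = 0 := by
  rw [show (fun n => LinearMap.ker (g ^ n)) = g.iterateKer from rfl,
    Submodule.mem_iSup_of_directed _ g.iterateKer.monotone.directed_le]
  rfl

/-- The eventual kernel subfunctor. -/
noncomputable def kerFunctor (f : CategoryTheory.End M) : Subfunctor M where
  toFun a := ⨆ n, LinearMap.ker (fApp M f a ^ n)
  map_mem := by
    intro a b α x hx
    obtain ⟨n, hn⟩ := (mem_iSup_ker_pow (fApp M f a) x).mp hx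
    refine (mem_iSup_ker_pow (fApp M f b) _).mpr ⟨n, ?_⟩
    rw [fApp_pow_naturality, hn, map_zero]

lemma mem_kerFunctor (f : CategoryTheory.End M) (a : C) (x : M.obj a) :
    x ∈ (kerFunctor M f).toFun a ↔ ∃ n, (fApp M f a ^ n) x = 0 := by
  exact mem_iSup_ker_pow (fApp M f a) x

/-- The eventual image subfunctor. -/
noncomputable def rangeFunctor (f : CategoryTheory.End M) : Subfunctor M where
  toFun a := ⨅ n, LinearMap.range (fApp M f a ^ n)
  map_mem := by
    intro a b α x hx
    rw [Submodule.mem_iInf] at hx ⊢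
    intro n
    obtain ⟨y, hy⟩ := hx n
    exact ⟨M.map α y, by rw [fApp_pow_naturality, hy]⟩

lemma mem_rangeFunctor (f : CategoryTheory.End M) (a : C) (x : M.obj a) :
    x ∈ (rangeFunctor M f).toFun a ↔ ∀ n, ∃ y, (fApp M f a ^ n) y = x := by
  show x ∈ ⨅ n, LinearMap.range (fApp M f a ^ n) ↔ _
  rw [Submodule.mem_iInf]
  rfl

lemma isCompl_kerFunctor_rangeFunctor (hM : IsLocallyFiniteEndoLength M)
    (f : CategoryTheory.End M) (a : C) :
    IsCompl ((kerFunctor M f).toFun a) ((rangeFunctor M f).toFun a) := by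
  obtain ⟨hN, hA⟩ := isFiniteLength_iff_isNoetherian_isArtinian.mp (hM a)
  set F := endToModEnd M f a with hF
  obtain ⟨n, h1, h2, h3⟩ := (F.eventually_isCompl_ker_pow_range_pow.and
    ((F.eventually_iSup_ker_pow_eq).and (F.eventually_iInf_range_pow_eq))).exists
  -- h1 : IsCompl (ker F^n) (range F^n), h2 : ⨆ ker = ker F^n, h3 : ⨅ range = range F^n
  have hker : ∀ x : (endRep M a).asModule, x ∈ (kerFunctor M f).toFun a ↔ x ∈ LinearMap.ker (F ^ n) := by
    intro x
    refine (mem_kerFunctor M f a x).trans ?_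
    rw [← h2, mem_iSup_ker_pow F x]
    constructor
    · rintro ⟨m, hm⟩
      exact ⟨m, show (F ^ m) x = 0 from (endToModEnd_pow_apply M f a m x).trans hm⟩
    · rintro ⟨m, hm⟩
      refine ⟨m, ?_⟩
      have : (F ^ m) x = 0 := hm
      exact (endToModEnd_pow_apply M f a m x).symm.trans this
  have hrange : ∀ x : (endRep M a).asModule, x ∈ (rangeFunctor M f).toFun a ↔ x ∈ LinearMap.range (F ^ n) := by
    intro x
    refine (mem_rangeFunctor M f a x).trans ?_
    rw [← h3, Submodule.mem_iInf]
    constructor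
    · intro h m
      obtain ⟨y, hy⟩ := h m
      exact ⟨y, by rw [endToModEnd_pow_apply]; exact hy⟩
    · intro h m
      obtain ⟨y, hy⟩ := h m
      exact ⟨y, (endToModEnd_pow_apply M f a m y).symm.trans hy⟩
  constructor
  · rw [disjoint_iff]
    rw [eq_bot_iff]
    intro x hx
    have h1' := Submodule.disjoint_def.mp h1.disjoint x
      ((hker x).mp hx.1) ((hrange x).mp hx.2)
    exact (Submodule.mem_bot k).mpr h1'
  · rw [codisjoint_iff, eq_top_iff]
    intro x _
    obtain ⟨y, z, hy, hz, hyz⟩ := Submodule.codisjoint_iff_exists_add_eq.mp h1.codisjoint x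
    exact Submodule.mem_sup.mpr ⟨y, (hker y).mpr hy, z, (hrange z).mpr hz, hyz⟩

lemma moduleCat_isIso_of_bijective {A B : ModuleCat.{u} k} (g : A ⟶ B)
    (hg : Function.Bijective g) : IsIso g := by
  let e := LinearEquiv.ofBijective g.hom hg
  refine ⟨⟨ModuleCat.ofHom e.symm.toLinearMap, ?_, ?_⟩⟩
  · exact ModuleCat.hom_ext <| LinearMap.ext fun x => e.symm_apply_apply x
  · exact ModuleCat.hom_ext <| LinearMap.ext fun x => e.apply_symm_apply x


end Aux

theorem isLocalRing_end_of_indecomposable (M : C ⥤ ModuleCat.{u} k) (hM : IsLocallyFiniteEndoLength M)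
    (hind : IsIndecomposable M) : IsLocalRing (CategoryTheory.End M) := by
  obtain ⟨⟨a₀, x₀, hx₀⟩, hsplit⟩ := hind
  haveI hnt : Nontrivial (CategoryTheory.End M) := by
    refine ⟨1, 0, fun h => hx₀ ?_⟩
    have h1 : (1 : CategoryTheory.End M).app a₀ x₀ = (0 : CategoryTheory.End M).app a₀ x₀ := by
      rw [h]
    rw [NatTrans.app_zero] at h1
    rw [show (1 : CategoryTheory.End M) = 𝟙 M from rfl, NatTrans.id_app] at h1
    simpa using h1
  refine ⟨fun {f g} hfg => ?_⟩
  have hg : g = 1 - f := eq_sub_of_add_eq' hfg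
  subst hg
  rcases hsplit (kerFunctor M f) (rangeFunctor M f)
      (isCompl_kerFunctor_rangeFunctor M hM f) with hX | hY
  · left
    rw [isUnit_iff_isIso]
    haveI : ∀ a : C, IsIso (f.app a) := by
      intro a
      apply moduleCat_isIso_of_bijective
      have hinj : Function.Injective (fApp M f a) := by
        rw [← LinearMap.ker_eq_bot, eq_bot_iff]
        intro x hx
        have hx' : x ∈ (kerFunctor M f).toFun a :=
          (mem_kerFunctor M f a x).mpr ⟨1, by simpa using hx⟩
        rw [hX a] at hx'
        exact hx'
      have hsurj : Function.Surjective (fApp M f a) := by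
        have hY' : (rangeFunctor M f).toFun a = ⊤ := by
          have hc := isCompl_kerFunctor_rangeFunctor M hM f a
          rw [hX a] at hc
          have := hc.sup_eq_top
          rwa [bot_sup_eq] at this
        intro y
        have hy : y ∈ (rangeFunctor M f).toFun a := by rw [hY']; trivial
        obtain ⟨x, hxy⟩ := (mem_rangeFunctor M f a y).mp hy 1
        exact ⟨x, by simpa using hxy⟩
      exact ⟨hinj, hsurj⟩
    exact NatIso.isIso_of_isIso_app f
  · right
    rw [isUnit_iff_isIso]
    haveI : ∀ a : C, IsIso ((1 - f).app a) := by
      intro a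
      have hX' : (kerFunctor M f).toFun a = ⊤ := by
        have hc := isCompl_kerFunctor_rangeFunctor M hM f a
        rw [hY a] at hc
        have := hc.sup_eq_top
        rwa [sup_bot_eq] at this
      have happ : ∀ x : M.obj a, (1 - f).app a x = x - fApp M f a x := by
        intro x
        rw [NatTrans.app_sub]
        rw [show (1 : CategoryTheory.End M) = 𝟙 M from rfl, NatTrans.id_app]
        rfl
      apply moduleCat_isIso_of_bijective
      constructor
      · intro x y hxy
        rw [happ, happ] at hxy
        -- reduce to: if x - f x = 0 then x = 0, by linearity
        have hz : ∀ z : M.obj a, z - fApp M f a z = 0 → z = 0 := by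
          intro z hz0
          have hfix : fApp M f a z = z := by
            have := sub_eq_zero.mp hz0
            exact this.symm
          have hpow : ∀ n : ℕ, (fApp M f a ^ n) z = z := by
            intro n
            induction n with
            | zero => simp
            | succ n ih => rw [pow_succ, Module.End.mul_apply, hfix, ih]
          obtain ⟨n, hn⟩ := (mem_kerFunctor M f a z).mp (by rw [hX']; trivial)
          rw [hpow n] at hn
          exact hn
        have := hz (x - y) (by rw [map_sub, sub_sub_sub_comm, hxy, sub_self])
        exact sub_eq_zero.mp this
      · intro y
        obtain ⟨n, hn⟩ := (mem_kerFunctor M f a y).mp (by rw [hX']; trivial)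
        refine ⟨∑ i ∈ Finset.range n, (fApp M f a ^ i) y, ?_⟩
        rw [happ, map_sum, ← Finset.sum_sub_distrib]
        have hcongr : ∀ i ∈ Finset.range n,
            (fApp M f a ^ i) y - fApp M f a ((fApp M f a ^ i) y)
              = (fun j => (fApp M f a ^ j) y) i - (fun j => (fApp M f a ^ j) y) (i + 1) := by
          intro i _
          simp only
          rw [pow_succ', Module.End.mul_apply]
        rw [Finset.sum_congr rfl hcongr, Finset.sum_range_sub']
        simp [hn]
    exact NatIso.isIso_of_isIso_app (1 - f)
end

section
/- Let k be a field, Q a quiver, and M a representation of Q over k such that the vector space M(a) is finite dimensional for every vertex a of Q. Then there exists a family (M_i)_{i ∈ Λ} of subrepresentations of M such that M is the internal direct sum ⊕_{i ∈ Λ} M_i, each M_i is indecomposable, and the endomorphism ring of each M_i in the category of representations of Q is a local ring. -/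
open CategoryTheory

universe u v w

variable {k : Type u} [Field k] {V : Type v} [Quiver.{w} V]

/-- A subrepresentation of a representation `M` of the quiver `V`,
where `M` is given as a prefunctor into the category of `k`-vector spaces. -/
structure SubRep (M : V ⥤q ModuleCat.{u} k) where
  toFun : ∀ a : V, Submodule k (M.obj a)
  map_mem : ∀ {a b : V} (α : a ⟶ b) {x : M.obj a}, x ∈ toFun a → M.map α x ∈ toFun b

/-- A subrepresentation viewed as a representation in its own right. -/
def SubRep.toRep {M : V ⥤q ModuleCat.{u} k} (N : SubRep M) : V ⥤q ModuleCat.{u} k where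
  obj a := ModuleCat.of k (N.toFun a)
  map α := ModuleCat.ofHom ((M.map α).hom.restrict fun x hx => N.map_mem α hx)

/-- A representation is indecomposable if it is nonzero and is not the internal
direct sum of two nonzero subrepresentations. -/
def IsIndecomposableRep (M : V ⥤q ModuleCat.{u} k) : Prop :=
  (∃ (a : V) (x : M.obj a), x ≠ 0) ∧
    ∀ X Y : SubRep M, (∀ a : V, IsCompl (X.toFun a) (Y.toFun a)) →
      (∀ a : V, X.toFun a = ⊥) ∨ (∀ a : V, Y.toFun a = ⊥)

/-- The endomorphism ring of a representation `M` of a quiver: families of linear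
maps commuting with the structure maps, as a subring of the product of the
endomorphism rings at each vertex. -/
def RepEnd (M : V ⥤q ModuleCat.{u} k) : Subring (∀ a : V, Module.End k (M.obj a)) where
  carrier := { f | ∀ (a b : V) (α : a ⟶ b),
    ((M.map α).hom : M.obj a →ₗ[k] M.obj b).comp (f a) = (f b).comp (M.map α).hom }
  mul_mem' := by
    intro f g hf hg a b α
    ext x
    have h1 := LinearMap.congr_fun (hf a b α) (g a x)
    have h2 := LinearMap.congr_fun (hg a b α) x
    simp only [LinearMap.comp_apply, Pi.mul_apply, Module.End.mul_apply] at *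
    rw [h1, h2]
  one_mem' := by
    intro a b α
    ext x
    simp
  add_mem' := by
    intro f g hf hg a b α
    ext x
    have h1 := LinearMap.congr_fun (hf a b α) x
    have h2 := LinearMap.congr_fun (hg a b α) x
    simp only [LinearMap.comp_apply, Pi.add_apply, LinearMap.add_apply, map_add] at *
    rw [h1, h2]
  zero_mem' := by
    intro a b α
    ext x
    simp
  neg_mem' := by
    intro f hf a b α
    ext x
    have h1 := LinearMap.congr_fun (hf a b α) x
    simp only [LinearMap.comp_apply, Pi.neg_apply, LinearMap.neg_apply, map_neg] at *
    rw [h1]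

section Decomp
variable (M : V ⥤q ModuleCat.{u} k)

/-- A family of submodules closed under the structure maps. -/
def IsSubrepFam (p : ∀ a : V, Submodule k (M.obj a)) : Prop :=
  ∀ {a b : V} (α : a ⟶ b) {x : M.obj a}, x ∈ p a → M.map α x ∈ p b

/-- A decomposition of `M` into an internal direct sum of nonzero subrepresentations. -/
structure Decomp where
  parts : Set (∀ a : V, Submodule k (M.obj a))
  subrep : ∀ p ∈ parts, IsSubrepFam M p
  nonzero : ∀ p ∈ parts, ∃ a, p a ≠ ⊥
  disj : ∀ (a : V), ∀ p ∈ parts, Disjoint (p a) (⨆ q ∈ parts \ {p}, q a)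
  sup_top : ∀ a : V, ⨆ p ∈ parts, p a = ⊤

variable {M}

namespace Decomp

/-- Refinement order: `D.Le D'` iff every part of `D'` is contained in a part of `D`. -/
def Le (D D' : Decomp M) : Prop := ∀ q ∈ D'.parts, ∃ p ∈ D.parts, q ≤ p

lemma Le.refl (D : Decomp M) : D.Le D := fun q hq => ⟨q, hq, le_rfl⟩

lemma Le.trans {D₁ D₂ D₃ : Decomp M} (h : D₁.Le D₂) (h' : D₂.Le D₃) : D₁.Le D₃ :=
  fun q hq => by
    obtain ⟨r, hr, hqr⟩ := h' q hq
    obtain ⟨p, hp, hrp⟩ := h r hr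
    exact ⟨p, hp, hqr.trans hrp⟩

/-- A nonzero family is contained in at most one part. -/
lemma eq_of_le (D : Decomp M) {p p' q : ∀ a : V, Submodule k (M.obj a)}
    (hp : p ∈ D.parts) (hp' : p' ∈ D.parts) (hq : q ≤ p) (hq' : q ≤ p') {a : V}
    (ha : q a ≠ ⊥) : p = p' := by
  by_contra hne
  apply ha
  rw [← le_bot_iff]
  have h1 : q a ≤ p a := hq a
  have h2 : q a ≤ ⨆ r ∈ D.parts \ {p}, r a :=
    le_trans (hq' a) (le_biSup (fun r => r a)
      (show p' ∈ D.parts \ {p} from ⟨hp', fun h => hne (h : p' = p).symm⟩))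
  exact le_trans (le_inf h1 h2) (D.disj a p hp).le_bot

/-- Distinct parts have distinct nonzero values at each vertex. -/
lemma eq_of_apply_eq (D : Decomp M) {p p' : ∀ a : V, Submodule k (M.obj a)}
    (hp : p ∈ D.parts) (hp' : p' ∈ D.parts) {a : V} (h : p a = p' a) (ha : p a ≠ ⊥) :
    p = p' := by
  by_contra hne
  apply ha
  rw [← le_bot_iff]
  have h2 : p a ≤ ⨆ r ∈ D.parts \ {p}, r a := by
    rw [h]
    exact le_biSup (fun r => r a)
      (show p' ∈ D.parts \ {p} from ⟨hp', fun hh => hne (hh : p' = p).symm⟩)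
  exact le_trans (le_inf le_rfl h2) (D.disj a p hp).le_bot

/-- Each part of a coarser decomposition is the sup of the finer parts inside it. -/
lemma part_eq_biSup {D D' : Decomp M} (h : D.Le D')
    {p : ∀ a : V, Submodule k (M.obj a)} (hp : p ∈ D.parts) (a : V) :
    p a = ⨆ q ∈ {q ∈ D'.parts | q ≤ p}, q a := by
  set A := ⨆ q ∈ {q ∈ D'.parts | q ≤ p}, q a with hA
  set B := ⨆ q ∈ {q ∈ D'.parts | ¬ q ≤ p}, q a with hB
  have hAp : A ≤ p a := by
    refine iSup₂_le fun q hq => hq.2 a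
  have hBC : B ≤ ⨆ r ∈ D.parts \ {p}, r a := by
    refine iSup₂_le fun q hq => ?_
    obtain ⟨r, hr, hqr⟩ := h q hq.1
    have hrp : r ≠ p := fun hh => hq.2 (hh ▸ hqr)
    exact le_trans (hqr a) (le_biSup (fun r => r a)
      (show r ∈ D.parts \ {p} from ⟨hr, hrp⟩))
  have hAB : A ⊔ B = ⊤ := by
    refine le_antisymm le_top ?_
    rw [← D'.sup_top a]
    refine iSup₂_le fun q hq => ?_
    by_cases hqp : q ≤ p
    · exact le_sup_of_le_left (le_biSup (fun r => r a)
        (show q ∈ {q | q ∈ D'.parts ∧ q ≤ p} from ⟨hq, hqp⟩))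
    · exact le_sup_of_le_right (le_biSup (fun r => r a)
        (show q ∈ {q | q ∈ D'.parts ∧ ¬ q ≤ p} from ⟨hq, hqp⟩))
  have := sup_inf_assoc_of_le (x := A) B (hAp)
  have hpa : p a = A ⊔ B ⊓ p a := by
    rw [← this, hAB, top_inf_eq]
  have hBbot : B ⊓ p a = ⊥ := ((D.disj a p hp).mono_right hBC).symm.eq_bot
  rw [hpa, hBbot, sup_bot_eq]

/-- If a part is nonzero at `a`, some finer part inside it is nonzero at `a`. -/
lemma exists_child {D D' : Decomp M} (h : D.Le D')
    {p : ∀ a : V, Submodule k (M.obj a)} (hp : p ∈ D.parts) {a : V} (ha : p a ≠ ⊥) :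
    ∃ q ∈ D'.parts, q ≤ p ∧ q a ≠ ⊥ := by
  by_contra hcon
  push_neg at hcon
  apply ha
  rw [part_eq_biSup h hp a]
  refine le_bot_iff.mp (iSup₂_le fun q hq => ?_)
  rcases eq_or_ne (q a) ⊥ with hb | hb
  · exact hb.le
  · exact absurd (hcon q hq.1 hq.2) hb



variable (D : Decomp M)

/-- The parts of `D` which are nonzero at vertex `a`. -/
def nz (a : V) : Set (∀ a : V, Submodule k (M.obj a)) := {p ∈ D.parts | p a ≠ ⊥}

lemma nz_indep (a : V) : iSupIndep (fun p : D.nz a => p.1 a) := by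
  intro i
  have hle : (⨆ (j : D.nz a) (_ : j ≠ i), j.1 a) ≤ ⨆ q ∈ D.parts \ {i.1}, q a := by
    refine iSup₂_le fun j hj => le_biSup (fun r => r a)
      (show j.1 ∈ D.parts \ {i.1} from ⟨j.2.1, fun h => hj (Subtype.ext h)⟩)
  exact (D.disj a i.1 i.2.1).mono_right hle

variable {a : V} [FiniteDimensional k (M.obj a)]

lemma nz_finite : (D.nz a).Finite := by
  have hv : ∀ p : D.nz a, ∃ x, x ∈ p.1 a ∧ x ≠ (0 : M.obj a) := fun p =>
    (Submodule.ne_bot_iff _).mp p.2.2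
  choose v hv1 hv2 using hv
  have hli := iSupIndep.linearIndependent _ (D.nz_indep a) hv1 hv2
  haveI := hli.finite
  exact Set.toFinite _

lemma ncard_nz_le : (D.nz a).ncard ≤ Module.finrank k (M.obj a) := by
  have hv : ∀ p : D.nz a, ∃ x, x ∈ p.1 a ∧ x ≠ (0 : M.obj a) := fun p =>
    (Submodule.ne_bot_iff _).mp p.2.2
  choose v hv1 hv2 using hv
  have hli := iSupIndep.linearIndependent _ (D.nz_indep a) hv1 hv2
  have hcard := hli.cardinalMk_le_finrank
  have := Cardinal.toNat_le_toNat hcard (Cardinal.nat_lt_aleph0 _)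
  rw [← Nat.card_coe_set_eq]; exact le_of_le_of_eq this (Cardinal.toNat_natCast _)

variable {D}

lemma ncard_nz_mono {D' : Decomp M} (h : D.Le D') : (D.nz a).ncard ≤ (D'.nz a).ncard := by
  classical
  set f : (∀ a : V, Submodule k (M.obj a)) → (∀ a : V, Submodule k (M.obj a)) :=
    fun p => if hp : p ∈ D.parts ∧ p a ≠ ⊥ then (D.exists_child h hp.1 hp.2).choose else p
    with hf
  have hspec : ∀ p (hp : p ∈ D.nz a),
      f p ∈ D'.parts ∧ f p ≤ p ∧ f p a ≠ ⊥ := by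
    intro p hp
    have := (D.exists_child h hp.1 hp.2).choose_spec
    simp only [hf, dif_pos (show p ∈ D.parts ∧ p a ≠ ⊥ from hp)]
    exact ⟨this.1, this.2.1, this.2.2⟩
  refine Set.ncard_le_ncard_of_injOn f (fun p hp => ⟨(hspec p hp).1, (hspec p hp).2.2⟩)
    (fun p hp p' hp' hpp => ?_) (D'.nz_finite)
  obtain ⟨h1, h2, h3⟩ := hspec p hp
  obtain ⟨h1', h2', h3'⟩ := hspec p' hp'
  exact D.eq_of_le hp.1 hp'.1 h2 (hpp ▸ h2') h3

lemma child_eq_of_max {D₀ : Decomp M} (h : D₀.Le D)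
    (hmax : (D.nz a).ncard ≤ (D₀.nz a).ncard)
    {p q q' : ∀ a : V, Submodule k (M.obj a)}
    (hp : p ∈ D₀.parts) (hq : q ∈ D.parts) (hqp : q ≤ p) (hqa : q a ≠ ⊥)
    (hq' : q' ∈ D.parts) (hq'p : q' ≤ p) (hq'a : q' a ≠ ⊥) : q = q' := by
  classical
  by_contra hne
  set g : (∀ a : V, Submodule k (M.obj a)) → (∀ a : V, Submodule k (M.obj a)) :=
    fun r => if r = p then q else
      (if hr : r ∈ D₀.parts ∧ r a ≠ ⊥ then (D₀.exists_child h hr.1 hr.2).choose else r)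
    with hg
  have hkey : ∀ r, r ∈ D₀.nz a → g r ∈ D.parts ∧ g r ≤ r ∧ g r a ≠ ⊥ := by
    intro r hr
    by_cases hrp : r = p
    · subst hrp
      simp only [hg, if_pos rfl]
      exact ⟨hq, hqp, hqa⟩
    · have hc := (D₀.exists_child h hr.1 hr.2).choose_spec
      simp only [hg, if_neg hrp, dif_pos (show r ∈ D₀.parts ∧ r a ≠ ⊥ from hr)]
      exact ⟨hc.1, hc.2.1, hc.2.2⟩
  have hmaps : ∀ r ∈ D₀.nz a, g r ∈ (D.nz a) \ {q'} := by
    intro r hr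
    obtain ⟨h1, h2, h3⟩ := hkey r hr
    refine ⟨⟨h1, h3⟩, ?_⟩
    intro hgq'
    have hgq' : g r = q' := hgq'
    by_cases hrp : r = p
    · apply hne
      have : g r = q := by simp only [hg, if_pos hrp]
      rw [← this, hgq']
    · apply hrp
      exact D₀.eq_of_le hr.1 hp (hgq' ▸ h2) hq'p (hgq' ▸ h3)
  have hinj : Set.InjOn g (D₀.nz a) := by
    intro r hr r' hr' hrr
    obtain ⟨h1, h2, h3⟩ := hkey r hr
    obtain ⟨h1', h2', h3'⟩ := hkey r' hr'
    exact D₀.eq_of_le hr.1 hr'.1 h2 (hrr ▸ h2') h3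
  have hlt : ((D.nz a) \ {q'}).ncard < (D.nz a).ncard :=
    Set.ncard_diff_singleton_lt_of_mem (show q' ∈ D.nz a from ⟨hq', hq'a⟩) (D.nz_finite)
  have := Set.ncard_le_ncard_of_injOn g hmaps hinj ((D.nz_finite).subset Set.diff_subset)
  omega

lemma child_apply_eq {D₀ : Decomp M} (h : D₀.Le D)
    (hmax : (D.nz a).ncard ≤ (D₀.nz a).ncard)
    {p q : ∀ a : V, Submodule k (M.obj a)}
    (hp : p ∈ D₀.parts) (hq : q ∈ D.parts) (hqp : q ≤ p) (hqa : q a ≠ ⊥) : q a = p a := by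
  refine le_antisymm (hqp a) ?_
  rw [D₀.part_eq_biSup h hp a]
  refine iSup₂_le fun r hr => ?_
  rcases eq_or_ne (r a) ⊥ with hb | hb
  · simp [hb]
  · rw [child_eq_of_max h hmax hp hr.1 hr.2 hb hq hqp hqa]



/-- A nonempty chain of submodules of a finite-dimensional space has a least element. -/
lemma exists_min_chain {W : Type*} [AddCommGroup W] [Module k W] [FiniteDimensional k W]
    {ι : Sort*} [Nonempty ι] (f : ι → Submodule k W)
    (h : ∀ i j, f i ≤ f j ∨ f j ≤ f i) : ∃ i, ∀ j, f i ≤ f j := by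
  have hS : (Set.range fun i => Module.finrank k (f i)).Nonempty := Set.range_nonempty _
  obtain ⟨i, hi⟩ := Nat.sInf_mem hS
  refine ⟨i, fun j => ?_⟩
  rcases h i j with hle | hle
  · exact hle
  · rcases eq_or_lt_of_le hle with heq | hlt
    · exact heq.ge
    · exfalso
      have h1 : Module.finrank k (f j) < Module.finrank k (f i) :=
        Submodule.finrank_lt_finrank_of_lt hlt
      have h2 : sInf (Set.range fun i => Module.finrank k (f i)) ≤ Module.finrank k (f j) :=
        Nat.sInf_le ⟨j, rfl⟩
      have hi' : Module.finrank k (f i) = sInf (Set.range fun i => Module.finrank k (f i)) := hi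
      omega

variable {M : V ⥤q ModuleCat.{u} k}

lemma chain_bounded (hM : ∀ a : V, FiniteDimensional k (M.obj a))
    {C : Set (Decomp M)} (hC : IsChain Decomp.Le C) (hne : C.Nonempty) :
    ∃ L : Decomp M, ∀ D ∈ C, D.Le L := by
  classical
  haveI := hM
  haveI : Nonempty C := hne.to_subtype
  have htot : ∀ D D' : C, D.1.Le D'.1 ∨ D'.1.Le D.1 := by
    intro D D'
    rcases eq_or_ne D.1 D'.1 with h | h
    · exact Or.inl (h ▸ Le.refl _)
    · exact hC D.2 D'.2 h
  set P : Set (∀ a : V, Submodule k (M.obj a)) :=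
    {f | (∃ a, f a ≠ ⊥) ∧ ∃ t : ∀ _ : C, ∀ b : V, Submodule k (M.obj b),
      (∀ D : C, t D ∈ D.1.parts) ∧ (∀ D D' : C, D.1.Le D'.1 → t D' ≤ t D) ∧
      f = fun b => ⨅ D : C, t D b} with hPdef
  have perA : ∀ a : V, (⨆ f ∈ P, f a = ⊤) ∧
      ∀ f ∈ P, Disjoint (f a) (⨆ g ∈ P \ {f}, g a) := by
    intro a
    -- a maximal decomposition for counting at `a`
    obtain ⟨D₀, hD₀⟩ : ∃ D₀ : C, ∀ D : C, (D.1.nz (a := a)).ncard ≤ (D₀.1.nz (a := a)).ncard := by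
      have hbdd : BddAbove (Set.range fun D : C => (D.1.nz (a := a)).ncard) := by
        refine ⟨Module.finrank k (M.obj a), ?_⟩
        rintro n ⟨D, rfl⟩
        exact D.1.ncard_nz_le
      obtain ⟨D₀, hD₀⟩ := Nat.sSup_mem (Set.range_nonempty _) hbdd
      exact ⟨D₀, fun D => le_of_le_of_eq (le_csSup hbdd ⟨D, rfl⟩) hD₀.symm⟩
    -- construction of threads through a given part of D₀
    have thread : ∀ p ∈ D₀.1.parts, p a ≠ ⊥ →
        ∃ t : ∀ _ : C, ∀ b : V, Submodule k (M.obj b),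
          (∀ D : C, t D ∈ D.1.parts) ∧ (∀ D D' : C, D.1.Le D'.1 → t D' ≤ t D) ∧
          (⨅ D : C, t D a) = p a := by
      intro p hp hpa
      have hpar : ∀ D : C, ¬ D₀.1.Le D.1 → ∃ r ∈ D.1.parts, p ≤ r := by
        intro D hD
        rcases htot D₀ D with h | h
        · exact absurd h hD
        · exact h p hp
      set t : ∀ _ : C, ∀ b : V, Submodule k (M.obj b) := fun D =>
        if h : D₀.1.Le D.1 then (D₀.1.exists_child h hp hpa).choose else (hpar D h).choose
        with htdef
      have ht1 : ∀ D : C, ∀ h : D₀.1.Le D.1, t D ∈ D.1.parts ∧ t D ≤ p ∧ t D a ≠ ⊥ := by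
        intro D h
        have := (D₀.1.exists_child h hp hpa).choose_spec
        simp only [htdef, dif_pos h]
        exact ⟨this.1, this.2.1, this.2.2⟩
      have ht2 : ∀ D : C, ∀ h : ¬ D₀.1.Le D.1, t D ∈ D.1.parts ∧ p ≤ t D := by
        intro D h
        have := (hpar D h).choose_spec
        simp only [htdef, dif_neg h]
        exact ⟨this.1, this.2⟩
      have htv : ∀ D : C, ∀ h : D₀.1.Le D.1, t D a = p a := fun D h =>
        child_apply_eq h (hD₀ D) hp (ht1 D h).1 (ht1 D h).2.1 (ht1 D h).2.2
      have hmem : ∀ D : C, t D ∈ D.1.parts := by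
        intro D
        by_cases h : D₀.1.Le D.1
        · exact (ht1 D h).1
        · exact (ht2 D h).1
      have hmono : ∀ D D' : C, D.1.Le D'.1 → t D' ≤ t D := by
        intro D D' hDD'
        by_cases h' : D₀.1.Le D'.1
        · by_cases h : D₀.1.Le D.1
          · obtain ⟨hq', hq'p, hq'a⟩ := ht1 D' h'
            obtain ⟨hq, hqp, hqa⟩ := ht1 D h
            obtain ⟨r, hr, hr'⟩ := hDD' (t D') hq'
            obtain ⟨s, hs, hrs⟩ := h r hr
            have hsp : s = p := D₀.1.eq_of_le hs hp (hr'.trans hrs) hq'p hq'a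
            have hrp : r ≤ p := hsp ▸ hrs
            have hra : r a ≠ ⊥ := fun hb => hq'a (le_bot_iff.mp (hb ▸ hr' a))
            have : r = t D := child_eq_of_max h (hD₀ D) hp hr hrp hra hq hqp hqa
            exact this ▸ hr'
          · exact fun b => le_trans ((ht1 D' h').2.1 b) ((ht2 D h).2 b)
        · have h : ¬ D₀.1.Le D.1 := fun hh => h' (hh.trans hDD')
          obtain ⟨hr', hpr'⟩ := ht2 D' h'
          obtain ⟨hr, hpr⟩ := ht2 D h
          obtain ⟨r, hrD, hr'r⟩ := hDD' (t D') hr'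
          obtain ⟨b, hb⟩ := D₀.1.nonzero p hp
          have : r = t D := D.1.eq_of_le hrD hr (hpr'.trans hr'r) hpr (a := b) hb
          exact this ▸ hr'r
      refine ⟨t, hmem, hmono, le_antisymm ?_ ?_⟩
      · exact le_trans (iInf_le _ D₀) (htv D₀ (Le.refl _)).le
      · refine le_iInf fun D => ?_
        by_cases h : D₀.1.Le D.1
        · exact (htv D h).symm.le
        · exact (ht2 D h).2 a
    -- eventual value of any thread with nonzero limit at a
    have star : ∀ t : ∀ _ : C, ∀ b : V, Submodule k (M.obj b),
        (∀ D : C, t D ∈ D.1.parts) → (∀ D D' : C, D.1.Le D'.1 → t D' ≤ t D) →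
        (⨅ D : C, t D a) ≠ ⊥ → ∀ D : C, D₀.1.Le D.1 → t D a = ⨅ D : C, t D a := by
      intro t htmem htmono hfa
      obtain ⟨D₁, hD₁⟩ : ∃ D₁ : C, ∀ D : C, t D₁ a ≤ t D a := by
        apply exists_min_chain (f := fun D : C => t D a)
        intro i j
        rcases htot i j with h | h
        · exact Or.inr (htmono i j h a)
        · exact Or.inl (htmono j i h a)
      have hfeq : (⨅ D : C, t D a) = t D₁ a := le_antisymm (iInf_le _ D₁) (le_iInf hD₁)
      obtain ⟨D₁, hD₀₁, hfeq⟩ : ∃ D₁ : C, D₀.1.Le D₁.1 ∧ (⨅ D : C, t D a) = t D₁ a := by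
        rcases htot D₀ D₁ with h | h
        · exact ⟨D₁, h, hfeq⟩
        · exact ⟨D₀, Le.refl _, by
            rw [hfeq, le_antisymm (hD₁ D₀) (htmono D₁ D₀ h a)]⟩
      intro D hD
      rcases htot D D₁ with h | h
      · obtain ⟨pD, hpD, htDp⟩ := hD (t D) (htmem D)
        have h1 : t D₁ ≤ t D := htmono D D₁ h
        have hne1 : t D₁ a ≠ ⊥ := fun hb => hfa (hfeq ▸ hb)
        have hnD : t D a ≠ ⊥ := fun hb => hne1 (le_bot_iff.mp (hb ▸ h1 a))
        have e1 : t D a = pD a := child_apply_eq hD (hD₀ D) hpD (htmem D) htDp hnD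
        have e2 : t D₁ a = pD a :=
          child_apply_eq hD₀₁ (hD₀ D₁) hpD (htmem D₁) (h1.trans htDp) hne1
        rw [e1, ← e2, ← hfeq]
      · have h2 : t D ≤ t D₁ := htmono D₁ D h
        exact le_antisymm (le_trans (h2 a) hfeq.ge) (iInf_le _ D)
    -- uniqueness of parts of P with given nonzero value at a
    have uniq : ∀ f ∈ P, ∀ g ∈ P, f a = g a → f a ≠ ⊥ → f = g := by
      rintro f hf g hg hfg hfa
      obtain ⟨-, t, htmem, htmono, rfl⟩ := hf
      obtain ⟨-, s, hsmem, hsmono, rfl⟩ := hg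
      simp only at hfg hfa ⊢
      have hga : (⨅ D : C, s D a) ≠ ⊥ := by rw [← hfg]; exact hfa
      have hteq : ∀ D : C, t D = s D := by
        have hD₀eq : t D₀ = s D₀ := by
          have e1 := star t htmem htmono hfa D₀ (Le.refl _)
          have e2 := star s hsmem hsmono hga D₀ (Le.refl _)
          exact D₀.1.eq_of_apply_eq (htmem D₀) (hsmem D₀)
            (by rw [e1, e2, hfg]) (by rw [e1]; exact hfa)
        intro D
        by_cases h : D₀.1.Le D.1
        · have e1 := star t htmem htmono hfa D h
          have e2 := star s hsmem hsmono hga D h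
          exact D.1.eq_of_apply_eq (htmem D) (hsmem D)
            (by rw [e1, e2, hfg]) (by rw [e1]; exact hfa)
        · have hDle : D.1.Le D₀.1 := (htot D₀ D).resolve_left h
          have e0 := star t htmem htmono hfa D₀ (Le.refl _)
          have hbot : t D₀ a ≠ ⊥ := by rw [e0]; exact hfa
          exact D.1.eq_of_le (htmem D) (hsmem D) (htmono D D₀ hDle)
            (hD₀eq ▸ hsmono D D₀ hDle) hbot
      funext b
      exact iInf_congr fun D => by rw [hteq D]
    constructor
    · refine le_antisymm le_top ?_
      have : (⊤ : Submodule k (M.obj a)) = ⨆ p ∈ D₀.1.parts, p a := (D₀.1.sup_top a).symm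
      rw [this]
      refine iSup₂_le fun p hp => ?_
      rcases eq_or_ne (p a) ⊥ with hb | hb
      · simp [hb]
      · obtain ⟨t, htmem, htmono, hlim⟩ := thread p hp hb
        have hfP : (fun b => ⨅ D : C, t D b) ∈ P :=
          ⟨⟨a, by simpa [hlim] using hb⟩, t, htmem, htmono, rfl⟩
        calc p a = (fun b => ⨅ D : C, t D b) a := hlim.symm
        _ ≤ ⨆ f ∈ P, f a := le_biSup (fun f => f a) hfP
    · intro f hf
      rcases eq_or_ne (f a) ⊥ with hb | hb
      · rw [hb]; exact disjoint_bot_left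
      · obtain ⟨hfnz, t, htmem, htmono, hfeq⟩ := hf
        have hfa : (⨅ D : C, t D a) ≠ ⊥ := by rw [show (⨅ D : C, t D a) = f a from by rw [hfeq]]; exact hb
        have e := star t htmem htmono hfa D₀ (Le.refl _)
        have efa : t D₀ a = f a := by rw [e, hfeq]
        have hle2 : (⨆ g ∈ P \ {f}, g a) ≤ ⨆ q ∈ D₀.1.parts \ {t D₀}, q a := by
          refine iSup₂_le fun g hg => ?_
          rcases eq_or_ne (g a) ⊥ with hgb | hgb
          · simp [hgb]
          · obtain ⟨hgnz, s, hsmem, hsmono, hgeq⟩ := hg.1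
            have hga : (⨅ D : C, s D a) ≠ ⊥ := by
              rw [show (⨅ D : C, s D a) = g a from by rw [hgeq]]; exact hgb
            have e' := star s hsmem hsmono hga D₀ (Le.refl _)
            have ega : s D₀ a = g a := by rw [e', hgeq]
            have hsne : s D₀ ≠ t D₀ := by
              intro hh
              exact hg.2 (uniq g hg.1 f ⟨hfnz, t, htmem, htmono, hfeq⟩
                (by rw [← ega, hh, efa]) hgb)
            calc g a = s D₀ a := ega.symm
            _ ≤ ⨆ q ∈ D₀.1.parts \ {t D₀}, q a :=
              le_biSup (fun q => q a)
                (show s D₀ ∈ D₀.1.parts \ {t D₀} from ⟨hsmem D₀, fun hh => hsne hh⟩)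
        have := (D₀.1.disj a (t D₀) (htmem D₀)).mono_right hle2
        rwa [efa] at this
  refine ⟨⟨P, ?_, ?_, fun a => (perA a).2, fun a => (perA a).1⟩, ?_⟩
  · rintro p ⟨-, t, htmem, -, rfl⟩
    intro a b α x hx
    simp only [Submodule.mem_iInf] at hx ⊢
    intro D
    exact D.1.subrep (t D) (htmem D) α (hx D)
  · rintro p ⟨hnz, -⟩
    exact hnz
  · rintro D hD q ⟨-, t, htmem, -, rfl⟩
    exact ⟨t ⟨D, hD⟩, htmem ⟨D, hD⟩, fun b => iInf_le (fun D' : C => t D' b) ⟨D, hD⟩⟩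



variable {M : V ⥤q ModuleCat.{u} k}

lemma exists_decomp (M : V ⥤q ModuleCat.{u} k) : Nonempty (Decomp M) := by
  classical
  by_cases h : ∀ a : V, (⊤ : Submodule k (M.obj a)) = ⊥
  · refine ⟨⟨∅, ?_, ?_, ?_, ?_⟩⟩
    · intro p hp; exact absurd hp (Set.notMem_empty p)
    · intro p hp; exact absurd hp (Set.notMem_empty p)
    · intro a p hp; exact absurd hp (Set.notMem_empty p)
    · intro a
      rw [h a]
      simp
  · push_neg at h
    obtain ⟨a₀, ha₀⟩ := h
    refine ⟨⟨{fun _ => ⊤}, ?_, ?_, ?_, ?_⟩⟩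
    · rintro p rfl
      intro a b α x _
      exact Submodule.mem_top
    · rintro p rfl
      exact ⟨a₀, ha₀⟩
    · rintro a p rfl
      have he : ({fun _ => ⊤} : Set (∀ a : V, Submodule k (M.obj a))) \
          {fun _ => ⊤} = ∅ := Set.diff_self
      rw [he]
      simp
    · intro a
      simp

lemma exists_maximal (hM : ∀ a : V, FiniteDimensional k (M.obj a)) :
    ∃ m : Decomp M, ∀ D, m.Le D → D.Le m :=
  exists_maximal_of_chains_bounded (r := Decomp.Le)
    (fun c hc => by
      rcases c.eq_empty_or_nonempty with rfl | hne
      · obtain ⟨D⟩ := exists_decomp M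
        exact ⟨D, by simp⟩
      · exact chain_bounded hM hc hne)
    (fun h h' => h.trans h')

lemma map_subtype_eq_bot_iff {W : Type*} [AddCommGroup W] [Module k W] (p : Submodule k W)
    (U : Submodule k p) : U.map p.subtype = ⊥ ↔ U = ⊥ := by
  constructor
  · intro h
    rw [eq_bot_iff]
    intro x hx
    have hx' : (x : W) ∈ U.map p.subtype := ⟨x, hx, rfl⟩
    rw [h, Submodule.mem_bot] at hx'
    rw [Submodule.mem_bot]
    exact Subtype.ext hx'
  · intro h
    rw [h, Submodule.map_bot]

/-- Every part of a maximal decomposition is indecomposable. -/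
lemma indecomposable_of_maximal {m : Decomp M} (hmax : ∀ D, m.Le D → D.Le m)
    (P : SubRep M) (hp : P.toFun ∈ m.parts) : IsIndecomposableRep P.toRep := by
  classical
  constructor
  · obtain ⟨a, ha⟩ := m.nonzero _ hp
    obtain ⟨x, hx, hx0⟩ := (Submodule.ne_bot_iff _).mp ha
    exact ⟨a, ⟨x, hx⟩, fun hh => hx0 (congrArg Subtype.val hh)⟩
  · intro X Y hXY
    by_contra hcon
    push_neg at hcon
    obtain ⟨⟨aX, haX⟩, ⟨aY, haY⟩⟩ := hcon
    set p : ∀ a : V, Submodule k (M.obj a) := P.toFun with hpdef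
    set X' : ∀ a : V, Submodule k (M.obj a) := fun a => (X.toFun a).map (p a).subtype with hX'def
    set Y' : ∀ a : V, Submodule k (M.obj a) := fun a => (Y.toFun a).map (p a).subtype with hY'def
    have hX'le : X' ≤ p := fun a => Submodule.map_subtype_le _ _
    have hY'le : Y' ≤ p := fun a => Submodule.map_subtype_le _ _
    have hXbot : ∀ a, X' a = ⊥ ↔ X.toFun a = ⊥ := by
      intro a
      exact map_subtype_eq_bot_iff _ _
    have hYbot : ∀ a, Y' a = ⊥ ↔ Y.toFun a = ⊥ := by
      intro a
      exact map_subtype_eq_bot_iff _ _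
    have hsup : ∀ a, X' a ⊔ Y' a = p a := by
      intro a
      have := congrArg (Submodule.map (p a).subtype) (hXY a).codisjoint.eq_top
      erw [Submodule.map_sup, Submodule.map_top, Submodule.range_subtype] at this
      exact this
    have hinf : ∀ a, X' a ⊓ Y' a = ⊥ := by
      intro a
      have := congrArg (Submodule.map (p a).subtype) (hXY a).disjoint.eq_bot
      erw [Submodule.map_inf _ (p a).injective_subtype, Submodule.map_bot] at this
      exact this
    have hX'sub : IsSubrepFam M X' := by
      intro a b α x hx
      obtain ⟨x₀, hx₀, rfl⟩ := hx
      exact ⟨P.toRep.map α x₀, X.map_mem α hx₀, by rfl⟩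
    have hY'sub : IsSubrepFam M Y' := by
      intro a b α x hx
      obtain ⟨x₀, hx₀, rfl⟩ := hx
      exact ⟨P.toRep.map α x₀, Y.map_mem α hx₀, by rfl⟩
    have hX'p : X' ≠ p := by
      intro hh
      apply haY
      rw [← hYbot aY]
      have h1 : Y' aY ≤ X' aY := by rw [hh]; exact hY'le aY
      have := le_inf h1 le_rfl
      rw [inf_comm] at this
      rw [← le_bot_iff, ← hinf aY]
      exact le_inf (by rw [hh]; exact hY'le aY) le_rfl
    have hY'p : Y' ≠ p := by
      intro hh
      apply haX
      rw [← hXbot aX, ← le_bot_iff, ← hinf aX]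
      exact le_inf le_rfl (by rw [hh]; exact hX'le aX)
    set S : Set (∀ a : V, Submodule k (M.obj a)) := m.parts \ {p} with hSdef
    have hinsert : insert p S = m.parts := by
      rw [hSdef, Set.insert_diff_singleton, Set.insert_eq_self.mpr hp]
    set parts' : Set (∀ a : V, Submodule k (M.obj a)) := insert X' (insert Y' S) with hparts'
    have hmem' : ∀ q ∈ parts', q = X' ∨ q = Y' ∨ q ∈ S := by
      intro q hq
      rcases hq with rfl | hq1
      · exact Or.inl rfl
      · rcases hq1 with rfl | hq2
        · exact Or.inr (Or.inl rfl)
        · exact Or.inr (Or.inr hq2)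
    have hsupS : ∀ a, p a ⊔ (⨆ q ∈ S, q a) = ⊤ := by
      intro a
      rw [← m.sup_top a, ← hinsert, iSup_insert]
    have hdisjS : ∀ a, Disjoint (p a) (⨆ q ∈ S, q a) := fun a => m.disj a p hp
    -- the refined decomposition
    have hsubrep' : ∀ q ∈ parts', IsSubrepFam M q := by
      intro q hq
      rcases hmem' q hq with rfl | rfl | hqS
      · exact hX'sub
      · exact hY'sub
      · exact m.subrep q hqS.1
    have hnonzero' : ∀ q ∈ parts', ∃ a, q a ≠ ⊥ := by
      intro q hq
      rcases hmem' q hq with rfl | rfl | hqS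
      · exact ⟨aX, fun hb => haX ((hXbot aX).mp hb)⟩
      · exact ⟨aY, fun hb => haY ((hYbot aY).mp hb)⟩
      · exact m.nonzero q hqS.1
    have hdisj' : ∀ (a : V), ∀ q ∈ parts', Disjoint (q a) (⨆ r ∈ parts' \ {q}, r a) := by
      intro a q hq
      rcases hmem' q hq with rfl | rfl | hqS
      · -- q = X'
        have hsub : (⨆ r ∈ parts' \ {X'}, r a) ≤ Y' a ⊔ ⨆ r ∈ S, r a := by
          refine iSup₂_le fun r hr => ?_
          rcases hmem' r hr.1 with rfl | rfl | hrS
          · exact absurd rfl hr.2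
          · exact le_sup_left
          · exact le_sup_of_le_right (le_biSup (fun r => r a) hrS)
        refine Disjoint.mono_right hsub ?_
        rw [disjoint_iff]
        have step1 : X' a ⊓ (Y' a ⊔ ⨆ r ∈ S, r a) ≤ Y' a := by
          have hmod : (Y' a ⊔ ⨆ r ∈ S, r a) ⊓ p a = Y' a ⊔ ((⨆ r ∈ S, r a) ⊓ p a) :=
            sup_inf_assoc_of_le _ (hY'le a)
          have hBp : (⨆ r ∈ S, r a) ⊓ p a = ⊥ := (hdisjS a).symm.eq_bot
          calc X' a ⊓ (Y' a ⊔ ⨆ r ∈ S, r a)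
              ≤ p a ⊓ (Y' a ⊔ ⨆ r ∈ S, r a) := inf_le_inf_right _ (hX'le a)
            _ = (Y' a ⊔ ⨆ r ∈ S, r a) ⊓ p a := by rw [inf_comm]
            _ = Y' a ⊔ ((⨆ r ∈ S, r a) ⊓ p a) := hmod
            _ = Y' a := by rw [hBp, sup_bot_eq]
        have h2 : X' a ⊓ (Y' a ⊔ ⨆ r ∈ S, r a) ≤ X' a ⊓ Y' a := le_inf inf_le_left step1
        rw [hinf a] at h2
        exact le_bot_iff.mp h2
      · -- q = Y'
        have hsub : (⨆ r ∈ parts' \ {Y'}, r a) ≤ X' a ⊔ ⨆ r ∈ S, r a := by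
          refine iSup₂_le fun r hr => ?_
          rcases hmem' r hr.1 with rfl | rfl | hrS
          · exact le_sup_left
          · exact absurd rfl hr.2
          · exact le_sup_of_le_right (le_biSup (fun r => r a) hrS)
        refine Disjoint.mono_right hsub ?_
        rw [disjoint_iff]
        have step1 : Y' a ⊓ (X' a ⊔ ⨆ r ∈ S, r a) ≤ X' a := by
          have hmod : (X' a ⊔ ⨆ r ∈ S, r a) ⊓ p a = X' a ⊔ ((⨆ r ∈ S, r a) ⊓ p a) :=
            sup_inf_assoc_of_le _ (hX'le a)
          have hBp : (⨆ r ∈ S, r a) ⊓ p a = ⊥ := (hdisjS a).symm.eq_bot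
          calc Y' a ⊓ (X' a ⊔ ⨆ r ∈ S, r a)
              ≤ p a ⊓ (X' a ⊔ ⨆ r ∈ S, r a) := inf_le_inf_right _ (hY'le a)
            _ = (X' a ⊔ ⨆ r ∈ S, r a) ⊓ p a := by rw [inf_comm]
            _ = X' a ⊔ ((⨆ r ∈ S, r a) ⊓ p a) := hmod
            _ = X' a := by rw [hBp, sup_bot_eq]
        have h2 : Y' a ⊓ (X' a ⊔ ⨆ r ∈ S, r a) ≤ Y' a ⊓ X' a := le_inf inf_le_left step1
        have h3 : Y' a ⊓ X' a = ⊥ := by rw [inf_comm, hinf a]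
        rw [h3] at h2
        exact le_bot_iff.mp h2
      · -- q ∈ S
        have hqp : q ≠ p := fun hh => hqS.2 hh
        have hsub : (⨆ r ∈ parts' \ {q}, r a) ≤ ⨆ r ∈ m.parts \ {q}, r a := by
          refine iSup₂_le fun r hr => ?_
          rcases hmem' r hr.1 with rfl | rfl | hrS
          · exact le_trans (hX'le a) (le_biSup (fun r => r a)
              (show p ∈ m.parts \ {q} from ⟨hp, fun hh => hqp hh.symm⟩))
          · exact le_trans (hY'le a) (le_biSup (fun r => r a)
              (show p ∈ m.parts \ {q} from ⟨hp, fun hh => hqp hh.symm⟩))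
          · exact le_biSup (fun r => r a) (show r ∈ m.parts \ {q} from ⟨hrS.1, hr.2⟩)
        exact (m.disj a q hqS.1).mono_right hsub
    have hsup' : ∀ a : V, ⨆ q ∈ parts', q a = ⊤ := by
      intro a
      have h1 : (⨆ q ∈ parts', q a) = X' a ⊔ (Y' a ⊔ ⨆ q ∈ S, q a) := by
        rw [hparts', iSup_insert, iSup_insert]
      rw [h1, ← sup_assoc, hsup a, hsupS a]
    set D' : Decomp M := ⟨parts', hsubrep', hnonzero', hdisj', hsup'⟩ with hD'
    -- maximality contradiction
    have hle : m.Le D' := by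
      intro q hq
      rcases hmem' q hq with rfl | rfl | hqS
      · exact ⟨p, hp, hX'le⟩
      · exact ⟨p, hp, hY'le⟩
      · exact ⟨q, hqS.1, le_rfl⟩
    obtain ⟨r, hr, hpr⟩ := hmax D' hle p hp
    rcases hmem' r hr with rfl | rfl | hrS
    · exact hX'p (le_antisymm hX'le hpr)
    · exact hY'p (le_antisymm hY'le hpr)
    · obtain ⟨b, hb⟩ := m.nonzero p hp
      have : p = r := m.eq_of_le hp hrS.1 le_rfl hpr (a := b) hb
      exact hrS.2 this.symm

end Decomp
end Decomp

section LocalEnd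

variable (N : V ⥤q ModuleCat.{u} k)

lemma repEnd_comm (f : RepEnd N) {a b : V} (α : a ⟶ b) (x : N.obj a) :
    N.map α (f.1 a x) = f.1 b (N.map α x) := by
  have hf : ∀ (a b : V) (α : a ⟶ b), ((N.map α).hom : N.obj a →ₗ[k] N.obj b).comp (f.1 a) =
      (f.1 b).comp (N.map α).hom := f.2
  have := LinearMap.congr_fun (hf a b α) x
  simpa using this

lemma repEnd_comm_pow (f : RepEnd N) {a b : V} (α : a ⟶ b) (n : ℕ) (x : N.obj a) :
    N.map α ((f.1 a ^ n) x) = (f.1 b ^ n) (N.map α x) := by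
  induction n generalizing x with
  | zero => simp
  | succ n ih =>
    calc N.map α ((f.1 a ^ (n+1)) x)
        = N.map α ((f.1 a ^ n) (f.1 a x)) := by rw [pow_succ, Module.End.mul_apply]
    _ = (f.1 b ^ n) (N.map α (f.1 a x)) := ih _
    _ = (f.1 b ^ n) (f.1 b (N.map α x)) := by rw [repEnd_comm N f α x]
    _ = (f.1 b ^ (n+1)) (N.map α x) := by rw [pow_succ, Module.End.mul_apply]

lemma isUnit_of_pointwise (f : RepEnd N) (h : ∀ a : V, IsUnit (f.1 a)) : IsUnit f := by
  classical
  set g : ∀ a : V, Module.End k (N.obj a) := fun a => ↑(h a).unit⁻¹ with hg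
  have hfg : ∀ a, f.1 a * g a = 1 := by
    intro a
    have := (h a).unit.mul_inv
    rwa [(h a).unit_spec] at this
  have hgf : ∀ a, g a * f.1 a = 1 := by
    intro a
    have := (h a).unit.inv_mul
    rwa [(h a).unit_spec] at this
  have happ1 : ∀ a (x : N.obj a), f.1 a (g a x) = x := by
    intro a x
    have := LinearMap.congr_fun (hfg a) x
    simpa using this
  have happ2 : ∀ a (x : N.obj a), g a (f.1 a x) = x := by
    intro a x
    have := LinearMap.congr_fun (hgf a) x
    simpa using this
  have hbij : ∀ a, Function.Bijective (f.1 a) := fun a => (Module.End.isUnit_iff _).mp (h a)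
  have hgmem : g ∈ RepEnd N := by
    change ∀ (a b : V) (α : a ⟶ b), ((N.map α).hom : N.obj a →ₗ[k] N.obj b).comp (g a) =
      (g b).comp (N.map α).hom
    intro a b α
    ext x
    simp only [LinearMap.comp_apply]
    apply (hbij b).1
    calc f.1 b (N.map α (g a x)) = N.map α (f.1 a (g a x)) := (repEnd_comm N f α _).symm
    _ = N.map α x := by rw [happ1]
    _ = f.1 b (g b (N.map α x)) := by rw [happ1]
  refine ⟨⟨f, ⟨g, hgmem⟩, ?_, ?_⟩, rfl⟩
  · exact Subtype.ext (funext fun a => hfg a)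
  · exact Subtype.ext (funext fun a => hgf a)

lemma isLocalRing_repEnd (hfd : ∀ a : V, FiniteDimensional k (N.obj a))
    (hind : IsIndecomposableRep N) : IsLocalRing (RepEnd N) := by
  haveI := hfd
  obtain ⟨⟨a₀, x₀, hx₀⟩, hsplit⟩ := hind
  haveI : Nontrivial (RepEnd N) := by
    refine ⟨0, 1, fun h => hx₀ ?_⟩
    have := congrArg (fun f : RepEnd N => (f : ∀ a : V, Module.End k (N.obj a)) a₀ x₀) h
    simpa using this.symm
  have main : ∀ f : RepEnd N, IsUnit f ∨ IsUnit (1 - f) := by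
    intro f
    set K : ∀ a : V, Submodule k (N.obj a) := fun a => ⨆ n, LinearMap.ker (f.1 a ^ n) with hK
    set I : ∀ a : V, Submodule k (N.obj a) := fun a => ⨅ n, LinearMap.range (f.1 a ^ n) with hI
    have hcompl : ∀ a, IsCompl (K a) (I a) := fun a =>
      LinearMap.isCompl_iSup_ker_pow_iInf_range_pow (f.1 a)
    have hKeq : ∀ a, ∃ n, K a = LinearMap.ker (f.1 a ^ n) := fun a =>
      ((f.1 a).eventually_iSup_ker_pow_eq).exists
    have hIeq : ∀ a, ∃ n, I a = LinearMap.range (f.1 a ^ n) := fun a =>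
      (LinearMap.eventually_iInf_range_pow_eq (f.1 a)).exists
    have hKsub : ∀ {a b : V} (α : a ⟶ b) {x : N.obj a}, x ∈ K a → N.map α x ∈ K b := by
      intro a b α x hx
      obtain ⟨n, hn⟩ := hKeq a
      rw [hn, LinearMap.mem_ker] at hx
      have hmem : (f.1 b ^ n) (N.map α x) = 0 := by
        rw [← repEnd_comm_pow N f α n x, hx, map_zero]
      exact le_iSup (fun n => LinearMap.ker (f.1 b ^ n)) n (LinearMap.mem_ker.mpr hmem)
    have hIsub : ∀ {a b : V} (α : a ⟶ b) {x : N.obj a}, x ∈ I a → N.map α x ∈ I b := by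
      intro a b α x hx
      rw [hI] at hx ⊢
      simp only [Submodule.mem_iInf] at hx ⊢
      intro n
      obtain ⟨y, hy⟩ := hx n
      exact ⟨N.map α y, by rw [← repEnd_comm_pow N f α n y, hy]⟩
    rcases hsplit ⟨K, hKsub⟩ ⟨I, hIsub⟩ hcompl with hKbot | hIbot
    · left
      apply isUnit_of_pointwise
      intro a
      rw [LinearMap.isUnit_iff_ker_eq_bot]
      have h1 : LinearMap.ker (f.1 a) ≤ K a := by
        have := le_iSup (fun n => LinearMap.ker (f.1 a ^ n)) 1
        simpa [pow_one] using this
      rw [← le_bot_iff]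
      exact le_trans h1 (hKbot a).le
    · right
      apply isUnit_of_pointwise
      intro a
      have hnil : IsNilpotent (f.1 a) := by
        obtain ⟨n, hn⟩ := hIeq a
        refine ⟨n, ?_⟩
        have hr : LinearMap.range (f.1 a ^ n) = ⊥ := by rw [← hn]; exact hIbot a
        exact LinearMap.range_eq_bot.mp hr
      have h1 : (1 - f : RepEnd N).1 a = 1 - f.1 a := rfl
      rw [h1]
      exact hnil.isUnit_one_sub

  constructor
  intro x y hxy
  rcases main x with h | h
  · exact Or.inl h
  · right
    have hy : y = 1 - x := eq_sub_of_add_eq' hxy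
    rwa [hy]

end LocalEnd

/-- Every pointwise finite-dimensional representation of a quiver over a field is
the internal direct sum of indecomposable subrepresentations with local
endomorphism rings. -/
theorem quiverRep_directSum_indecomposable_localEnd
    (M : V ⥤q ModuleCat.{u} k) (hM : ∀ a : V, FiniteDimensional k (M.obj a)) :
    ∃ (Λ : Type (max u v)) (Mi : Λ → SubRep M),
      (∀ a : V, iSupIndep (fun i : Λ => (Mi i).toFun a) ∧
        (⨆ i : Λ, (Mi i).toFun a) = ⊤) ∧
      (∀ i : Λ, IsIndecomposableRep (Mi i).toRep) ∧
      (∀ i : Λ, IsLocalRing (RepEnd (Mi i).toRep)) := by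
  classical
  obtain ⟨m, hmax⟩ := Decomp.exists_maximal (M := M) hM
  refine ⟨↥m.parts, fun q => ⟨q.1, m.subrep q.1 q.2⟩, ?_, ?_, ?_⟩
  · intro a
    constructor
    · rw [iSupIndep_def]
      intro i
      have hle : (⨆ (j : m.parts) (_ : j ≠ i), j.1 a) ≤ ⨆ q ∈ m.parts \ {i.1}, q a :=
        iSup₂_le fun j hj => le_biSup (fun r => r a)
          (show j.1 ∈ m.parts \ {i.1} from ⟨j.2, fun h => hj (Subtype.ext h)⟩)
      exact (m.disj a i.1 i.2).mono_right hle
    · rw [iSup_subtype]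
      exact m.sup_top a
  · intro i
    exact Decomp.indecomposable_of_maximal hmax _ i.2
  · intro i
    refine isLocalRing_repEnd _ ?_ (Decomp.indecomposable_of_maximal hmax _ i.2)
    intro a
    haveI := hM a
    exact inferInstanceAs (FiniteDimensional k (i.1 a))
end
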